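/- arXiv:2007.03631 — 4 statements merged into one kernel-verified Lean document; each statement's English description precedes it below -/
import Mathlib

section
/- Let G be the Gaussian distribution on ℝ^{2N} given by (x, H_N x) with x ∼ N(0, ε·I_N), where H_N is the normalized Hadamard matrix. For subsets S, T ⊆ [N] with |S| ≠ |T|, the moment E_{(x,y)∼G}[∏_{i∈S} x_i ∏_{j∈T} y_j] equals 0. -/
open MeasureTheory ProbabilityTheory
open scoped NNReal ENNReal

section Aux

open Real Filter Topology

lemma integrable_pow_mul_gexp {v : ℝ} (hv : 0 < v) (k : ℕ) :
    Integrable (fun t : ℝ => t ^ k * Real.exp (-t ^ 2 / (2 * v))) := by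
  have hC1 : (0:ℝ) ≤ (k.factorial : ℝ) * (4*v) ^ k := by positivity
  set C : ℝ := (k.factorial : ℝ) * (4*v) ^ k + 1 with hC
  have h4 : (0:ℝ) < 1 / (4*v) := by positivity
  refine Integrable.mono' ((integrable_exp_neg_mul_sq h4).const_mul C) ?_ ?_
  · exact (continuous_pow k |>.mul (by continuity)).aestronglyMeasurable
  · refine ae_of_all _ fun t => ?_
    have hnn : (0:ℝ) ≤ t^2 / (4*v) := by positivity
    have hkey : |t| ^ k ≤ C * Real.exp (t^2 / (4*v)) := by
      have hexp1 : (1:ℝ) ≤ Real.exp (t^2/(4*v)) := Real.one_le_exp hnn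
      rcases le_total (|t|) 1 with h | h
      · have : |t| ^ k ≤ 1 := pow_le_one₀ (abs_nonneg t) h
        nlinarith
      · have h1 : |t| ^ k ≤ |t| ^ (2*k) := pow_le_pow_right₀ h (by omega)
        have h2 : |t| ^ (2*k) = (t^2/(4*v))^k * (4*v)^k := by
          rw [div_pow, pow_mul, sq_abs]
          field_simp
        have h3 : (t^2/(4*v))^k ≤ (k.factorial : ℝ) * Real.exp (t^2/(4*v)) := by
          have h := Real.pow_div_factorial_le_exp (t^2/(4*v)) hnn k
          rw [div_le_iff₀ (by positivity : (0:ℝ) < (k.factorial:ℝ))] at h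
          linarith [h]
        calc |t| ^ k ≤ (t^2/(4*v))^k * (4*v)^k := h1.trans_eq h2
          _ ≤ ((k.factorial : ℝ) * Real.exp (t^2/(4*v))) * (4*v)^k := by
              apply mul_le_mul_of_nonneg_right h3 (by positivity)
          _ = ((k.factorial : ℝ) * (4*v)^k) * Real.exp (t^2/(4*v)) := by ring
          _ ≤ C * Real.exp (t^2/(4*v)) :=
              mul_le_mul_of_nonneg_right (by rw [hC]; linarith) (Real.exp_pos _).le
    have hsplit : Real.exp (-t^2/(2*v)) = Real.exp (-(t^2/(4*v))) * Real.exp (-(1/(4*v)) * t^2) := by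
      rw [← Real.exp_add]; congr 1; field_simp; ring
    have hepos : (0:ℝ) < Real.exp (-(1/(4*v)) * t^2) := Real.exp_pos _
    rw [norm_mul, norm_pow]
    simp only [Real.norm_eq_abs, Real.abs_exp]
    rw [hsplit]
    calc |t| ^ k * (Real.exp (-(t^2/(4*v))) * Real.exp (-(1/(4*v)) * t^2))
        ≤ (C * Real.exp (t^2/(4*v))) * (Real.exp (-(t^2/(4*v))) * Real.exp (-(1/(4*v)) * t^2)) := by
          apply mul_le_mul_of_nonneg_right hkey (by positivity)
      _ = C * Real.exp (-(1/(4*v)) * t^2) := by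
          rw [show C * Real.exp (t^2/(4*v)) * (Real.exp (-(t^2/(4*v))) * Real.exp (-(1/(4*v)) * t^2)) = C * (Real.exp (t^2/(4*v)) * Real.exp (-(t^2/(4*v)))) * Real.exp (-(1/(4*v)) * t^2) by ring, ← Real.exp_add]
          simp

lemma tendsto_pow_gexp {v : ℝ} (hv : 0 < v) (m : ℕ) {l : Filter ℝ} (hl : l ≤ Filter.cocompact ℝ) :
    Tendsto (fun t : ℝ => t ^ m * Real.exp (-t ^ 2 / (2 * v))) l (𝓝 0) := by
  rw [tendsto_zero_iff_norm_tendsto_zero]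
  have h := (tendsto_rpow_abs_mul_exp_neg_mul_sq_cocompact
    (a := 1 / (2 * v)) (by positivity) (m : ℝ)).mono_left hl
  refine h.congr fun t => ?_
  rw [norm_mul, norm_pow, Real.norm_eq_abs, Real.norm_eq_abs, Real.abs_exp,
    Real.rpow_natCast]
  congr 2
  field_simp

lemma hasDerivAt_pow_gexp {v : ℝ} (hv : 0 < v) (m : ℕ) (t : ℝ) :
    HasDerivAt (fun t : ℝ => t ^ m * Real.exp (-t ^ 2 / (2 * v)))
      ((m : ℝ) * (t ^ (m - 1) * Real.exp (-t ^ 2 / (2 * v)))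
        - (1 / v) * (t ^ (m + 1) * Real.exp (-t ^ 2 / (2 * v)))) t := by
  have h1 : HasDerivAt (fun t : ℝ => t ^ m) ((m : ℝ) * t ^ (m - 1)) t := hasDerivAt_pow m t
  have h2 : HasDerivAt (fun t : ℝ => -t ^ 2 / (2 * v)) (-t / v) t := by
    have hsq : HasDerivAt (fun t : ℝ => t ^ 2) (2 * t) t := by simpa using hasDerivAt_pow 2 t
    have h := hsq.const_mul (-(1 / (2 * v)))
    have heq : (fun t : ℝ => -t ^ 2 / (2 * v)) = fun y : ℝ => -(1 / (2 * v)) * y ^ 2 := by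
      funext y; field_simp
    rw [heq]
    refine h.congr_deriv ?_
    field_simp
  have h3 := h2.exp
  have := h1.mul h3
  refine this.congr_deriv ?_
  field_simp
  ring

lemma key1 {v : ℝ} (hv : 0 < v) (m : ℕ) :
    ∫ t : ℝ, t ^ (m + 1) * Real.exp (-t ^ 2 / (2 * v))
      = v * m * ∫ t : ℝ, t ^ (m - 1) * Real.exp (-t ^ 2 / (2 * v)) := by
  set g := fun t : ℝ => Real.exp (-t ^ 2 / (2 * v)) with hg
  set F' := fun t : ℝ => (m : ℝ) * (t ^ (m - 1) * g t) - (1 / v) * (t ^ (m + 1) * g t) with hF'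
  have hint1 := integrable_pow_mul_gexp hv (m - 1)
  have hint2 := integrable_pow_mul_gexp hv (m + 1)
  have hintF' : Integrable F' := (hint1.const_mul _).sub (hint2.const_mul _)
  have hderiv : ∀ t : ℝ, HasDerivAt (fun t => t ^ m * g t) (F' t) t :=
    fun t => hasDerivAt_pow_gexp hv m t
  have htop : Tendsto (fun t : ℝ => t ^ m * g t) atTop (𝓝 0) :=
    tendsto_pow_gexp hv m (by rw [cocompact_eq_atBot_atTop]; exact le_sup_right)
  have hbot : Tendsto (fun t : ℝ => t ^ m * g t) atBot (𝓝 0) :=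
    tendsto_pow_gexp hv m (by rw [cocompact_eq_atBot_atTop]; exact le_sup_left)
  have h1 : ∫ t in Set.Ioi (0:ℝ), F' t = 0 - (0 ^ m * g 0) :=
    integral_Ioi_of_hasDerivAt_of_tendsto' (fun x _ => hderiv x) hintF'.integrableOn htop
  have h2 : ∫ t in Set.Iic (0:ℝ), F' t = 0 ^ m * g 0 - 0 :=
    integral_Iic_of_hasDerivAt_of_tendsto' (fun x _ => hderiv x) hintF'.integrableOn hbot
  have h3 : ∫ t : ℝ, F' t = 0 := by
    rw [← intervalIntegral.integral_Iic_add_Ioi hintF'.integrableOn hintF'.integrableOn, h1, h2]; ring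
  rw [hF'] at h3
  rw [integral_sub (hint1.const_mul _) (hint2.const_mul _),
    integral_const_mul, integral_const_mul] at h3
  have hv' : v ≠ 0 := ne_of_gt hv
  have h4 : (1 / v) * ∫ t : ℝ, t ^ (m + 1) * g t = (m : ℝ) * ∫ t : ℝ, t ^ (m - 1) * g t := by
    linarith [h3]
  calc ∫ t : ℝ, t ^ (m + 1) * g t
      = v * ((1 / v) * ∫ t : ℝ, t ^ (m + 1) * g t) := by field_simp
    _ = v * ((m : ℝ) * ∫ t : ℝ, t ^ (m - 1) * g t) := by rw [h4]
    _ = v * m * ∫ t : ℝ, t ^ (m - 1) * g t := by ring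

noncomputable def gmu (ε : ℝ≥0) (k : ℕ) : ℝ := ∫ t, t ^ k ∂(gaussianReal 0 ε)

lemma gmu_zero (ε : ℝ≥0) : gmu ε 0 = 1 := by
  simp [gmu]

lemma gmu_eq {ε : ℝ≥0} (hε : ε ≠ 0) (k : ℕ) :
    gmu ε k = (Real.sqrt (2 * π * ε))⁻¹ * ∫ t : ℝ, t ^ k * Real.exp (-t ^ 2 / (2 * (ε:ℝ))) := by
  rw [gmu, gaussianReal_of_var_ne_zero 0 hε]
  have hmeas : Measurable fun t : ℝ => (gaussianPDFReal 0 ε t).toNNReal :=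
    (measurable_gaussianPDFReal 0 ε).real_toNNReal
  rw [show gaussianPDF 0 ε = fun t => ((gaussianPDFReal 0 ε t).toNNReal : ℝ≥0∞) from rfl,
    integral_withDensity_eq_integral_smul hmeas]
  rw [← integral_const_mul]
  congr 1
  funext t
  rw [NNReal.smul_def, Real.coe_toNNReal _ (gaussianPDFReal_nonneg 0 ε t)]
  simp only [gaussianPDFReal, sub_zero, smul_eq_mul]
  ring

lemma integrable_pow_gauss (ε : ℝ≥0) (k : ℕ) :
    Integrable (fun t : ℝ => t ^ k) (gaussianReal 0 ε) := by
  rcases eq_or_ne ε 0 with rfl | hε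
  · rw [gaussianReal_zero_var]
    refine ⟨(measurable_id.pow_const k).aestronglyMeasurable, ?_⟩
    have hm : Measurable fun a : ℝ => ‖a ^ k‖ₑ := by measurability
    rw [hasFiniteIntegral_def, lintegral_dirac' _ hm]
    exact enorm_lt_top
  · rw [gaussianReal_of_var_ne_zero 0 hε]
    rw [show gaussianPDF 0 ε = fun t => ENNReal.ofReal (gaussianPDFReal 0 ε t) from rfl]
    rw [integrable_withDensity_iff (measurable_gaussianPDFReal 0 ε).ennreal_ofReal
      (ae_of_all _ fun t => ENNReal.ofReal_lt_top)]
    have hv : (0:ℝ) < (ε:ℝ) := by positivity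
    have := (integrable_pow_mul_gexp hv k).const_mul (Real.sqrt (2 * π * ε))⁻¹
    refine this.congr ?_
    refine ae_of_all _ fun t => ?_
    dsimp only
    rw [ENNReal.toReal_ofReal (gaussianPDFReal_nonneg 0 ε t)]
    simp only [gaussianPDFReal, sub_zero]
    ring

lemma gmu_succ (ε : ℝ≥0) (m : ℕ) : gmu ε (m + 1) = (ε : ℝ) * m * gmu ε (m - 1) := by
  rcases eq_or_ne ε 0 with rfl | hε
  · simp [gmu, gaussianReal_zero_var, integral_dirac]
  · have hv : (0:ℝ) < (ε:ℝ) := by positivity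
    rw [gmu_eq hε, gmu_eq hε, key1 hv m]
    ring

end Aux

/-- Entry `(a,b)` of the `N × N` normalized Hadamard matrix, `N = 2^n`. -/
noncomputable def hadamardEntry {n : ℕ} (a b : Fin n → Bool) : ℝ :=
  (-1 : ℝ) ^ (Finset.univ.filter fun t => a t ∧ b t).card / Real.sqrt (2 ^ n)

section Aux2

open Real Filter Topology

noncomputable def gPi (n : ℕ) (ε : ℝ≥0) : Measure ((Fin n → Bool) → ℝ) :=
  Measure.pi fun _ => gaussianReal 0 ε

noncomputable def gMom (n : ℕ) (ε : ℝ≥0) (e : (Fin n → Bool) → ℕ) : ℝ := ∏ c, gmu ε (e c)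

def add1 {α : Type*} [DecidableEq α] (e : α → ℕ) (b : α) : α → ℕ :=
  fun c => if c = b then e c + 1 else e c

def sub1 {α : Type*} [DecidableEq α] (e : α → ℕ) (b : α) : α → ℕ :=
  fun c => if c = b then e c - 1 else e c

variable {n : ℕ} (ε : ℝ≥0)

lemma integral_monomial (e : (Fin n → Bool) → ℕ) :
    ∫ x, ∏ c, x c ^ e c ∂(gPi n ε) = gMom n ε e := by
  letI : MeasureSpace ℝ := ⟨gaussianReal 0 ε⟩
  haveI : SigmaFinite (volume : Measure ℝ) := by
    show SigmaFinite (gaussianReal 0 ε); infer_instance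
  exact MeasureTheory.integral_fintype_prod_eq_prod (ι := Fin n → Bool)
      (E := fun _ => ℝ) (fun c t => t ^ e c)

lemma integrable_monomial (e : (Fin n → Bool) → ℕ) :
    Integrable (fun x : (Fin n → Bool) → ℝ => ∏ c, x c ^ e c) (gPi n ε) := by
  letI : MeasureSpace ℝ := ⟨gaussianReal 0 ε⟩
  haveI : SigmaFinite (volume : Measure ℝ) := by
    show SigmaFinite (gaussianReal 0 ε); infer_instance
  exact MeasureTheory.Integrable.fintype_prod (f := fun c t => t ^ e c)
    (fun c => integrable_pow_gauss ε (e c))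

lemma gMom_add1 (e : (Fin n → Bool) → ℕ) (b : Fin n → Bool) :
    gMom n ε (add1 e b) = (ε : ℝ) * (e b) * gMom n ε (sub1 e b) := by
  unfold gMom
  rw [← Finset.mul_prod_erase Finset.univ _ (Finset.mem_univ b),
    ← Finset.mul_prod_erase Finset.univ (fun c => gmu ε (sub1 e b c)) (Finset.mem_univ b)]
  have h1 : ∏ c ∈ Finset.univ.erase b, gmu ε (add1 e b c)
      = ∏ c ∈ Finset.univ.erase b, gmu ε (sub1 e b c) := by
    refine Finset.prod_congr rfl fun c hc => ?_
    have : c ≠ b := (Finset.mem_erase.mp hc).1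
    simp [add1, sub1, this]
  rw [h1, show add1 e b b = e b + 1 by simp [add1], show sub1 e b b = e b - 1 by simp [sub1],
    gmu_succ]
  ring

lemma hadamard_orth {j j' : Fin n → Bool} (hjj : j ≠ j') :
    ∑ b : Fin n → Bool, hadamardEntry j b * hadamardEntry j' b = 0 := by
  have h1 : ∀ (a b : Fin n → Bool),
      (-1 : ℝ) ^ (Finset.univ.filter fun t => a t ∧ b t).card
        = ∏ t, (if a t ∧ b t then (-1 : ℝ) else 1) := by
    intro a b
    rw [Finset.prod_ite, Finset.prod_const, Finset.prod_const, one_pow, mul_one]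
  have key : ∑ b : Fin n → Bool,
      ((-1 : ℝ) ^ (Finset.univ.filter fun t => j t ∧ b t).card
        * (-1 : ℝ) ^ (Finset.univ.filter fun t => j' t ∧ b t).card) = 0 := by
    have h2 : ∀ b : Fin n → Bool,
        (-1 : ℝ) ^ (Finset.univ.filter fun t => j t ∧ b t).card
          * (-1 : ℝ) ^ (Finset.univ.filter fun t => j' t ∧ b t).card
        = ∏ t, ((if j t ∧ b t then (-1 : ℝ) else 1) * (if j' t ∧ b t then (-1 : ℝ) else 1)) := by
      intro b; rw [h1, h1, ← Finset.prod_mul_distrib]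
    simp_rw [h2]
    have h3 := Finset.prod_univ_sum (fun _ : Fin n => (Finset.univ : Finset Bool))
      (fun t v => (if j t ∧ v then (-1 : ℝ) else 1) * (if j' t ∧ v then (-1 : ℝ) else 1))
    rw [Fintype.piFinset_univ] at h3
    rw [← h3]
    obtain ⟨t₀, ht₀⟩ := Function.ne_iff.mp hjj
    refine Finset.prod_eq_zero (Finset.mem_univ t₀) ?_
    rw [Fintype.sum_bool]
    rcases Bool.eq_false_or_eq_true (j t₀) with h | h <;>
      rcases Bool.eq_false_or_eq_true (j' t₀) with h' | h' <;>
      simp [h, h'] at ht₀ ⊢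
  have h4 : ∀ b : Fin n → Bool, hadamardEntry j b * hadamardEntry j' b
      = ((-1 : ℝ) ^ (Finset.univ.filter fun t => j t ∧ b t).card
        * (-1 : ℝ) ^ (Finset.univ.filter fun t => j' t ∧ b t).card)
          / (Real.sqrt (2 ^ n) * Real.sqrt (2 ^ n)) := by
    intro b; rw [hadamardEntry, hadamardEntry, div_mul_div_comm]
  simp_rw [h4]
  rw [← Finset.sum_div, key, zero_div]

noncomputable def gP (e : (Fin n → Bool) → ℕ) (T : Finset (Fin n → Bool)) : ℝ :=
  ∫ x, (∏ c, x c ^ e c) * ∏ j ∈ T, (∑ b : Fin n → Bool, hadamardEntry j b * x b) ∂(gPi n ε)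

lemma prod_add1 (e : (Fin n → Bool) → ℕ) (b : Fin n → Bool) (x : (Fin n → Bool) → ℝ) :
    ∏ c, x c ^ (add1 e b c) = x b * ∏ c, x c ^ e c := by
  have h : ∀ c, x c ^ (add1 e b c) = (if c = b then x c else 1) * x c ^ e c := by
    intro c; unfold add1
    by_cases hc : c = b
    · simp [hc, pow_succ]; ring
    · simp [hc]
  simp_rw [h]
  rw [Finset.prod_mul_distrib, Finset.prod_ite_eq' Finset.univ b (fun c => x c)]
  simp

lemma expand_step (e : (Fin n → Bool) → ℕ) {j : Fin n → Bool} {T : Finset (Fin n → Bool)}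
    (hj : j ∉ T) (x : (Fin n → Bool) → ℝ) :
    (∏ c, x c ^ e c) * ∏ j' ∈ insert j T, (∑ b : Fin n → Bool, hadamardEntry j' b * x b)
      = ∑ b : Fin n → Bool, hadamardEntry j b *
          ((∏ c, x c ^ (add1 e b c)) * ∏ j' ∈ T, (∑ b' : Fin n → Bool, hadamardEntry j' b' * x b')) := by
  rw [Finset.prod_insert hj, Finset.sum_mul, Finset.mul_sum]
  refine Finset.sum_congr rfl fun b _ => ?_
  rw [prod_add1]
  ring

lemma integrable_gP (T : Finset (Fin n → Bool)) : ∀ e : (Fin n → Bool) → ℕ,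
    Integrable (fun x : (Fin n → Bool) → ℝ =>
      (∏ c, x c ^ e c) * ∏ j ∈ T, (∑ b : Fin n → Bool, hadamardEntry j b * x b)) (gPi n ε) := by
  induction T using Finset.induction_on with
  | empty => intro e; simpa using integrable_monomial ε e
  | @insert j T hj ih =>
    intro e
    have heq : (fun x : (Fin n → Bool) → ℝ =>
        (∏ c, x c ^ e c) * ∏ j' ∈ insert j T, (∑ b : Fin n → Bool, hadamardEntry j' b * x b))
        = fun x => ∑ b : Fin n → Bool, hadamardEntry j b *
          ((∏ c, x c ^ (add1 e b c)) * ∏ j' ∈ T, (∑ b' : Fin n → Bool, hadamardEntry j' b' * x b')) := by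
      funext x; exact expand_step e hj x
    rw [heq]
    exact integrable_finset_sum _ fun b _ => (ih (add1 e b)).const_mul _

lemma gP_empty (e : (Fin n → Bool) → ℕ) : gP ε e ∅ = gMom n ε e := by
  unfold gP
  simp only [Finset.prod_empty, mul_one]
  exact integral_monomial ε e

lemma gP_insert (e : (Fin n → Bool) → ℕ) {j : Fin n → Bool} {T : Finset (Fin n → Bool)}
    (hj : j ∉ T) :
    gP ε e (insert j T) = ∑ b : Fin n → Bool, hadamardEntry j b * gP ε (add1 e b) T := by
  unfold gP
  rw [show (fun x : (Fin n → Bool) → ℝ =>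
      (∏ c, x c ^ e c) * ∏ j' ∈ insert j T, (∑ b : Fin n → Bool, hadamardEntry j' b * x b))
      = fun x => ∑ b : Fin n → Bool, hadamardEntry j b *
        ((∏ c, x c ^ (add1 e b c)) * ∏ j' ∈ T, (∑ b' : Fin n → Bool, hadamardEntry j' b' * x b'))
    from funext fun x => expand_step e hj x]
  rw [integral_finset_sum _ fun b _ => (integrable_gP ε T (add1 e b)).const_mul _]
  exact Finset.sum_congr rfl fun b _ => integral_const_mul _ _

lemma sub1_add1_self (e : (Fin n → Bool) → ℕ) (b : Fin n → Bool) :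
    sub1 (add1 e b) b = e := by
  funext c; unfold sub1 add1; by_cases hc : c = b <;> simp [hc]

lemma sub1_add1_comm {e : (Fin n → Bool) → ℕ} {b c : Fin n → Bool} (hec : e c ≠ 0) :
    sub1 (add1 e b) c = add1 (sub1 e c) b := by
  funext d
  by_cases hdc : d = c
  · subst hdc
    by_cases hdb : d = b
    · subst hdb; simp [sub1, add1]; omega
    · simp [sub1, add1, hdb]
  · by_cases hdb : d = b
    · subst hdb; simp [sub1, add1, hdc]
    · simp [sub1, add1, hdc, hdb]

lemma gP_rec (T : Finset (Fin n → Bool)) : ∀ (e : (Fin n → Bool) → ℕ) (j₀ : Fin n → Bool),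
    j₀ ∉ T → gP ε e (insert j₀ T)
      = (ε : ℝ) * ∑ c : Fin n → Bool, hadamardEntry j₀ c * (e c) * gP ε (sub1 e c) T := by
  induction T using Finset.induction_on with
  | empty =>
    intro e j₀ _
    rw [gP_insert ε e (Finset.notMem_empty j₀)]
    rw [Finset.mul_sum]
    refine Finset.sum_congr rfl fun b _ => ?_
    rw [gP_empty, gP_empty, gMom_add1]
    ring
  | @insert j₁ T₁ hj₁ ih =>
    intro e j₀ hj₀
    have hj₀j₁ : j₀ ≠ j₁ := fun h => hj₀ (h ▸ Finset.mem_insert_self j₁ T₁)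
    have hj₀T₁ : j₀ ∉ T₁ := fun h => hj₀ (Finset.mem_insert_of_mem h)
    have hj₁' : j₁ ∉ insert j₀ T₁ := by
      simp only [Finset.mem_insert]
      push_neg
      exact ⟨fun h => hj₀j₁ h.symm, hj₁⟩
    rw [Finset.insert_comm, gP_insert ε e hj₁']
    have step1 : ∀ b : Fin n → Bool, gP ε (add1 e b) (insert j₀ T₁)
        = (ε : ℝ) * ∑ c : Fin n → Bool, hadamardEntry j₀ c * ((add1 e b) c) * gP ε (sub1 (add1 e b) c) T₁ :=
      fun b => ih (add1 e b) j₀ hj₀T₁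
    simp_rw [step1]
    have split : ∀ b c : Fin n → Bool,
        hadamardEntry j₀ c * ((add1 e b) c) * gP ε (sub1 (add1 e b) c) T₁
          = hadamardEntry j₀ c * (e c) * gP ε (sub1 (add1 e b) c) T₁
            + (if c = b then hadamardEntry j₀ c * gP ε e T₁ else 0) := by
      intro b c
      by_cases hcb : c = b
      · subst hcb
        rw [show (add1 e c) c = e c + 1 by simp [add1], sub1_add1_self, if_pos rfl]
        push_cast
        ring
      · rw [show (add1 e b) c = e c by simp [add1, hcb], if_neg hcb]
        ring
    simp_rw [split, Finset.sum_add_distrib, Finset.sum_ite_eq', Finset.mem_univ, if_pos]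
    have expand2 : ∀ b : Fin n → Bool,
        hadamardEntry j₁ b * ((ε : ℝ) *
          ((∑ c : Fin n → Bool, hadamardEntry j₀ c * (e c) * gP ε (sub1 (add1 e b) c) T₁)
            + hadamardEntry j₀ b * gP ε e T₁))
        = (∑ c : Fin n → Bool, (ε : ℝ) *
            (hadamardEntry j₀ c * (e c) * (hadamardEntry j₁ b * gP ε (sub1 (add1 e b) c) T₁)))
          + (ε : ℝ) * (hadamardEntry j₁ b * hadamardEntry j₀ b) * gP ε e T₁ := by
      intro b
      have hterm : ∀ c : Fin n → Bool, (ε : ℝ) *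
          (hadamardEntry j₀ c * (e c) * (hadamardEntry j₁ b * gP ε (sub1 (add1 e b) c) T₁))
          = (hadamardEntry j₁ b * (ε : ℝ)) * (hadamardEntry j₀ c * (e c) * gP ε (sub1 (add1 e b) c) T₁) :=
        fun c => by ring
      rw [Finset.sum_congr rfl fun c _ => hterm c, ← Finset.mul_sum]
      ring
    rw [Finset.sum_congr rfl fun b _ => expand2 b, Finset.sum_add_distrib]
    have hzero : ∑ b : Fin n → Bool, (ε : ℝ) * (hadamardEntry j₁ b * hadamardEntry j₀ b) * gP ε e T₁ = 0 := by
      have : ∀ b : Fin n → Bool, (ε : ℝ) * (hadamardEntry j₁ b * hadamardEntry j₀ b) * gP ε e T₁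
          = (hadamardEntry j₁ b * hadamardEntry j₀ b) * ((ε : ℝ) * gP ε e T₁) := fun b => by ring
      rw [Finset.sum_congr rfl fun b _ => this b, ← Finset.sum_mul,
        hadamard_orth (Ne.symm hj₀j₁), zero_mul]
    rw [hzero, add_zero, Finset.sum_comm]
    have inner : ∀ c : Fin n → Bool,
        ∑ b : Fin n → Bool, (ε : ℝ) *
          (hadamardEntry j₀ c * (e c) * (hadamardEntry j₁ b * gP ε (sub1 (add1 e b) c) T₁))
        = (ε : ℝ) * (hadamardEntry j₀ c * (e c) * gP ε (sub1 e c) (insert j₁ T₁)) := by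
      intro c
      by_cases hec : e c = 0
      · simp [hec]
      · have hcomm : ∀ b : Fin n → Bool, sub1 (add1 e b) c = add1 (sub1 e c) b :=
          fun b => sub1_add1_comm hec
        simp_rw [hcomm]
        rw [gP_insert ε (sub1 e c) hj₁]
        have hterm2 : ∀ b : Fin n → Bool, (ε : ℝ) *
            (hadamardEntry j₀ c * (e c) * (hadamardEntry j₁ b * gP ε (add1 (sub1 e c) b) T₁))
            = ((ε : ℝ) * (hadamardEntry j₀ c * (e c)))
              * (hadamardEntry j₁ b * gP ε (add1 (sub1 e c) b) T₁) := fun b => by ring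
        rw [Finset.sum_congr rfl fun b _ => hterm2 b, ← Finset.mul_sum]
        ring
    rw [Finset.sum_congr rfl fun c _ => inner c, Finset.mul_sum]

lemma chi_sub1 {S : Finset (Fin n → Bool)} {c : Fin n → Bool} (hc : c ∈ S) :
    sub1 (fun d => if d ∈ S then 1 else 0) c = fun d => if d ∈ S.erase c then 1 else 0 := by
  funext d
  by_cases hdc : d = c
  · subst hdc; simp [sub1, hc]
  · simp [sub1, hdc, Finset.mem_erase]

lemma gP_main (T : Finset (Fin n → Bool)) : ∀ S : Finset (Fin n → Bool), S.card ≠ T.card →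
    gP ε (fun c => if c ∈ S then 1 else 0) T = 0 := by
  induction T using Finset.induction_on with
  | empty =>
    intro S hS
    rw [Finset.card_empty] at hS
    have hem : S.Nonempty := Finset.nonempty_of_ne_empty (fun h => hS (by simp [h]))
    obtain ⟨i, hi⟩ := hem
    rw [gP_empty]
    unfold gMom
    refine Finset.prod_eq_zero (Finset.mem_univ i) ?_
    dsimp only
    rw [if_pos hi]
    have h := gmu_succ ε 0
    simpa using h
  | @insert j₀ T' hj₀ ih =>
    intro S hS
    rw [gP_rec ε T' _ j₀ hj₀]
    have hterm : ∀ c : Fin n → Bool,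
        hadamardEntry j₀ c * (((fun d => if d ∈ S then 1 else 0) c : ℕ) : ℝ)
          * gP ε (sub1 (fun d => if d ∈ S then 1 else 0) c) T' = 0 := by
      intro c
      by_cases hc : c ∈ S
      · have hcard : (S.erase c).card ≠ T'.card := by
          rw [Finset.card_erase_of_mem hc]
          rw [Finset.card_insert_of_notMem hj₀] at hS
          have : 0 < S.card := Finset.card_pos.mpr ⟨c, hc⟩
          omega
        rw [chi_sub1 hc, ih (S.erase c) hcard, mul_zero]
      · simp [hc]
    rw [Finset.sum_congr rfl fun c _ => hterm c, Finset.sum_const_zero, mul_zero]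

lemma chi_prod (S : Finset (Fin n → Bool)) (x : (Fin n → Bool) → ℝ) :
    ∏ c, x c ^ (if c ∈ S then (1:ℕ) else 0) = ∏ i ∈ S, x i := by
  have h : ∀ c, x c ^ (if c ∈ S then (1:ℕ) else 0) = if c ∈ S then x c else 1 := by
    intro c; by_cases hc : c ∈ S <;> simp [hc]
  simp_rw [h]
  rw [Finset.prod_ite_mem, Finset.univ_inter]

end Aux2

/-- For the Gaussian distribution `G` of `(x, H_N x)` with
`x ∼ N(0, ε·I_N)`, and subsets `S, T ⊆ [N]` with `|S| ≠ |T|`, the moment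
`E[∏_{i∈S} x_i ∏_{j∈T} y_j]` vanishes. -/
theorem gaussian_forrelation_moment_ne_card_eq_zero
    {n : ℕ} (ε : ℝ≥0) (S T : Finset (Fin n → Bool)) (hST : S.card ≠ T.card) :
    (∫ x, (∏ i ∈ S, x i) *
        ∏ j ∈ T, (∑ b : Fin n → Bool, hadamardEntry j b * x b)
        ∂(Measure.pi fun _ : Fin n → Bool => gaussianReal 0 ε))
      = 0 := by
  have h := gP_main ε T S hST
  rw [gP] at h
  rw [show (fun x : (Fin n → Bool) → ℝ => (∏ i ∈ S, x i) *
      ∏ j ∈ T, (∑ b : Fin n → Bool, hadamardEntry j b * x b))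
      = fun x : (Fin n → Bool) → ℝ => (∏ c, x c ^ (if c ∈ S then (1:ℕ) else 0)) *
      ∏ j ∈ T, (∑ b : Fin n → Bool, hadamardEntry j b * x b)
    from funext fun x => by rw [chi_prod]]
  exact h
end

section
/- Let G be the Gaussian distribution on ℝ^{2N} given by (x, H_N x) with x ∼ N(0, ε·I_N). For subsets S, T ⊆ [N] with |S| = |T| = i, the absolute value of the moment Ĝ(S,T) = E[∏_{i∈S} x_i ∏_{j∈T} y_j] is at most ε^i · i! · N^{-i/2}. -/
open MeasureTheory ProbabilityTheory
open scoped NNReal ENNReal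
open Real

namespace GFMB

lemma pdf_eq (v : ℝ≥0) (hv : v ≠ 0) :
    gaussianReal (0:ℝ) v
      = volume.withDensity (fun x => ((gaussianPDFReal 0 v x).toNNReal : ℝ≥0∞)) := by
  rw [gaussianReal_of_var_ne_zero _ hv]; rfl

lemma integrable_pdf_mul_pow (v : ℝ≥0) (hv : v ≠ 0) (k : ℕ) :
    Integrable (fun x : ℝ => gaussianPDFReal 0 v x * x ^ k) := by
  have hv' : (0:ℝ) < v := by positivity
  have hb : (0:ℝ) < (2 * (v:ℝ))⁻¹ := by positivity
  have h1 := integrable_rpow_mul_exp_neg_mul_sq hb (s := (k:ℝ))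
    (lt_of_lt_of_le (by norm_num) (Nat.cast_nonneg k))
  simp_rw [Real.rpow_natCast] at h1
  have h2 := h1.const_mul ((√(2 * π * v))⁻¹)
  have heq : (fun x : ℝ => (√(2 * π * v))⁻¹ * (x ^ k * rexp (-(2 * (v:ℝ))⁻¹ * x ^ 2)))
      = fun x => gaussianPDFReal 0 v x * x ^ k := by
    funext x
    rw [gaussianPDFReal, show -(x - 0) ^ 2 / (2 * (v:ℝ)) = -(2 * (v:ℝ))⁻¹ * x ^ 2 by ring]
    ring
  rwa [heq] at h2

lemma integral_gauss (v : ℝ≥0) (hv : v ≠ 0) (g : ℝ → ℝ) :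
    ∫ x, g x ∂gaussianReal 0 v = ∫ x, gaussianPDFReal 0 v x * g x := by
  rw [pdf_eq v hv,
    integral_withDensity_eq_integral_smul ((measurable_gaussianPDFReal 0 v).real_toNNReal) g]
  refine integral_congr_ae (Filter.Eventually.of_forall fun x => ?_)
  simp only [NNReal.smul_def, Real.coe_toNNReal _ (gaussianPDFReal_nonneg 0 v x), smul_eq_mul]

lemma integrable_pow (v : ℝ≥0) (k : ℕ) :
    Integrable (fun x : ℝ => x ^ k) (gaussianReal 0 v) := by
  rcases eq_or_ne v 0 with h | h
  · subst h; rw [gaussianReal_zero_var]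
    refine ⟨by fun_prop, ?_⟩
    simp only [HasFiniteIntegral, lintegral_dirac]
    exact ENNReal.coe_lt_top
  · rw [pdf_eq v h,
      integrable_withDensity_iff_integrable_smul ((measurable_gaussianPDFReal 0 v).real_toNNReal)]
    refine (integrable_pdf_mul_pow v h k).congr
      (Filter.Eventually.of_forall fun x => ?_)
    simp only [NNReal.smul_def, Real.coe_toNNReal _ (gaussianPDFReal_nonneg 0 v x), smul_eq_mul]

lemma integral_pow_odd (v : ℝ≥0) {k : ℕ} (hk : Odd k) :
    ∫ x, x ^ k ∂gaussianReal 0 v = 0 := by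
  have hmap := gaussianReal_map_const_mul (μ := 0) (v := v) (-1)
  have h1 : (NNReal.mk ((-1:ℝ)^2) (sq_nonneg _)) = 1 := by
    ext; norm_num
  rw [mul_zero, h1, one_mul] at hmap
  have key : ∫ x, x ^ k ∂gaussianReal 0 v = ∫ x, ((-1) * x) ^ k ∂gaussianReal 0 v := by
    conv_lhs => rw [← hmap]
    rw [integral_map (by fun_prop) (by fun_prop)]
  have h2 : ∀ x : ℝ, ((-1) * x) ^ k = -(x ^ k) := fun x => by
    rw [neg_one_mul, hk.neg_pow]
  simp_rw [h2, integral_neg] at key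
  linarith

lemma integral_pow_zero (v : ℝ≥0) :
    ∫ x, x ^ (0:ℕ) ∂gaussianReal 0 v = 1 := by
  simp

lemma integral_sq (v : ℝ≥0) :
    ∫ x, x ^ (2:ℕ) ∂gaussianReal 0 v = v := by
  rcases eq_or_ne v 0 with h | h
  · subst h; rw [gaussianReal_zero_var, integral_dirac]; norm_num
  · have hv' : (0:ℝ) < v := by positivity
    have h2v : (0:ℝ) < 2 * v := by positivity
    have hb : (0:ℝ) < (2 * (v:ℝ))⁻¹ := by positivity
    rw [integral_gauss v h]
    have key : (fun x : ℝ => gaussianPDFReal 0 v x * x ^ 2)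
        = fun x => (√(2 * π * v))⁻¹ * (x ^ 2 * rexp (-(2 * (v:ℝ))⁻¹ * x ^ 2)) := by
      funext x
      rw [gaussianPDFReal, show -(x - 0) ^ 2 / (2 * (v:ℝ)) = -(2 * (v:ℝ))⁻¹ * x ^ 2 by ring]
      ring
    rw [key, integral_const_mul]
    have heven : ∫ x : ℝ, x ^ 2 * rexp (-(2 * (v:ℝ))⁻¹ * x ^ 2)
        = 2 * ∫ x in Set.Ioi (0:ℝ), x ^ 2 * rexp (-(2 * (v:ℝ))⁻¹ * x ^ 2) := by
      rw [← integral_comp_abs (f := fun x => x ^ 2 * rexp (-(2 * (v:ℝ))⁻¹ * x ^ 2))]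
      refine integral_congr_ae (Filter.Eventually.of_forall fun x => ?_)
      simp [sq_abs]
    have hIoi := integral_rpow_mul_exp_neg_mul_rpow (p := 2) (q := 2) (b := (2 * (v:ℝ))⁻¹)
      (by norm_num) (by norm_num) hb
    have hconv : ∫ x in Set.Ioi (0:ℝ), x ^ (2:ℝ) * rexp (-(2 * (v:ℝ))⁻¹ * x ^ (2:ℝ))
        = ∫ x in Set.Ioi (0:ℝ), x ^ (2:ℕ) * rexp (-(2 * (v:ℝ))⁻¹ * x ^ (2:ℕ)) := by
      refine integral_congr_ae (Filter.Eventually.of_forall fun x => ?_)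
      norm_cast
    rw [hconv] at hIoi
    rw [heven, hIoi]
    -- arithmetic
    have hG : Real.Gamma ((2 + 1) / 2) = √π / 2 := by
      rw [show ((2:ℝ) + 1) / 2 = 1 / 2 + 1 by norm_num, Real.Gamma_add_one (by norm_num),
        Real.Gamma_one_half_eq]
      ring
    have hrp : ((2 * (v:ℝ))⁻¹) ^ (-((2:ℝ) + 1) / 2) = (2 * (v:ℝ)) * √(2 * (v:ℝ)) := by
      rw [Real.inv_rpow h2v.le, ← Real.rpow_neg h2v.le,
        show -(-((2:ℝ) + 1) / 2) = 1 + (1/2:ℝ) by norm_num,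
        Real.rpow_add h2v, Real.rpow_one, Real.sqrt_eq_rpow]
    rw [hrp, hG, show 2 * π * (v:ℝ) = (2 * (v:ℝ)) * π by ring, Real.sqrt_mul h2v.le]
    have hs0 : (0:ℝ) < √(2 * (v:ℝ)) := Real.sqrt_pos.2 h2v
    have hp0 : (0:ℝ) < √π := Real.sqrt_pos.2 pi_pos
    have hs : √(2 * (v:ℝ)) ^ 2 = 2 * (v:ℝ) := Real.sq_sqrt h2v.le
    field_simp


lemma pi_integrable (v : ℝ≥0) {ι : Type*} [Fintype ι] (e : ι → ℕ) :
    Integrable (fun x : ι → ℝ => ∏ b, (x b) ^ (e b))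
      (Measure.pi fun _ : ι => gaussianReal 0 v) := by
  letI : MeasureSpace ℝ := ⟨gaussianReal 0 v⟩
  haveI : SigmaFinite (volume : Measure ℝ) := by
    show SigmaFinite (gaussianReal 0 v); infer_instance
  exact MeasureTheory.Integrable.fintype_prod (𝕜 := ℝ)
    (f := fun b (t : ℝ) => t ^ (e b)) (fun b => integrable_pow v (e b))

lemma pi_integral (v : ℝ≥0) {ι : Type*} [Fintype ι] (e : ι → ℕ) :
    ∫ x : ι → ℝ, ∏ b, (x b) ^ (e b) ∂(Measure.pi fun _ : ι => gaussianReal 0 v)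
      = ∏ b, ∫ t, t ^ (e b) ∂(gaussianReal 0 v) := by
  letI : MeasureSpace ℝ := ⟨gaussianReal 0 v⟩
  haveI : SigmaFinite (volume : Measure ℝ) := by
    show SigmaFinite (gaussianReal 0 v); infer_instance
  exact MeasureTheory.integral_fintype_prod_eq_prod (𝕜 := ℝ)
    (fun b (t : ℝ) => t ^ (e b))

section Comb

variable {V : Type*} [Fintype V] [DecidableEq V]

/-- exponent of coordinate `b` in the monomial indexed by `g`. -/
def expo (S T : Finset V) (g : {x // x ∈ T} → V) (b : V) : ℕ :=
  (if b ∈ S then 1 else 0) + (Finset.univ.filter fun j => g j = b).card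

lemma expo_card_sum (S T : Finset V) (g : {x // x ∈ T} → V) :
    ∑ b, (Finset.univ.filter fun j => g j = b).card = T.card := by
  have h := Finset.card_eq_sum_card_fiberwise
    (s := (Finset.univ : Finset {x // x ∈ T})) (t := (Finset.univ : Finset V))
    (f := g) (fun j _ => Finset.mem_univ _)
  rw [Finset.card_univ, Fintype.card_coe] at h
  exact h.symm

lemma comb {S T : Finset V} {i : ℕ} (hS : S.card = i) (hT : T.card = i)
    (g : {x // x ∈ T} → V) (hg : ∀ b, Even (expo S T g b)) :
    Function.Injective g ∧ ∀ j, g j ∈ S := by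
  classical
  set c : V → ℕ := fun b => (Finset.univ.filter fun j => g j = b).card with hc
  have hsum : ∑ b, c b = i := by rw [expo_card_sum S T g, hT]
  have hS1 : ∀ b ∈ S, 1 ≤ c b := by
    intro b hb
    by_contra h
    push_neg at h
    have h0 : c b = 0 := Nat.lt_one_iff.1 h
    have h2 := hg b
    rw [expo, if_pos hb] at h2
    rw [show (Finset.univ.filter fun j => g j = b).card = c b from rfl, h0] at h2
    simp at h2
  have hsumS : ∑ b ∈ S, c b = i := by
    refine le_antisymm ?_ ?_
    · rw [← hsum]
      exact Finset.sum_le_sum_of_subset (Finset.subset_univ S)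
    · calc i = S.card := hS.symm
        _ = ∑ _b ∈ S, 1 := by rw [Finset.sum_const, smul_eq_mul, mul_one]
        _ ≤ ∑ b ∈ S, c b := Finset.sum_le_sum hS1
  have hone : ∀ b ∈ S, c b = 1 := by
    have heq : ∑ b ∈ S, (1 : ℕ) = ∑ b ∈ S, c b := by
      rw [hsumS, Finset.sum_const, smul_eq_mul, mul_one, hS]
    intro b hb
    exact ((Finset.sum_eq_sum_iff_of_le hS1).1 heq b hb).symm
  have hzero : ∀ b, b ∉ S → c b = 0 := by
    intro b hb
    have hsplit : (∑ b ∈ Finset.univ \ S, c b) + ∑ b ∈ S, c b = ∑ b, c b :=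
      Finset.sum_sdiff (Finset.subset_univ S)
    have h0 : ∑ b ∈ Finset.univ \ S, c b = 0 := by omega
    exact Finset.sum_eq_zero_iff.1 h0 b
      (Finset.mem_sdiff.2 ⟨Finset.mem_univ _, hb⟩)
  have hmem : ∀ j, g j ∈ S := by
    intro j
    by_contra hj
    have h0 := hzero _ hj
    have hmemf : j ∈ Finset.univ.filter fun j' => g j' = g j :=
      Finset.mem_filter.2 ⟨Finset.mem_univ _, rfl⟩
    have hempty : (Finset.univ.filter fun j' => g j' = g j) = ∅ :=
      Finset.card_eq_zero.1 h0
    rw [hempty] at hmemf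
    exact absurd hmemf (Finset.notMem_empty j)
  refine ⟨?_, hmem⟩
  intro j j' hjj
  have h1 : c (g j) = 1 := hone _ (hmem j)
  have hj : j ∈ Finset.univ.filter fun j'' => g j'' = g j :=
    Finset.mem_filter.2 ⟨Finset.mem_univ _, rfl⟩
  have hj' : j' ∈ Finset.univ.filter fun j'' => g j'' = g j :=
    Finset.mem_filter.2 ⟨Finset.mem_univ _, hjj.symm⟩
  exact Finset.card_le_one.1 (le_of_eq h1) j hj j' hj'

lemma expo_of_inj {S T : Finset V} {i : ℕ} (hS : S.card = i) (hT : T.card = i)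
    (g : {x // x ∈ T} → V) (hinj : Function.Injective g) (hmem : ∀ j, g j ∈ S) :
    ∀ b, expo S T g b = if b ∈ S then 2 else 0 := by
  classical
  have himg : Finset.univ.image g = S := by
    refine Finset.eq_of_subset_of_card_le ?_ ?_
    · intro b hb
      obtain ⟨j, _, rfl⟩ := Finset.mem_image.1 hb
      exact hmem j
    · rw [Finset.card_image_of_injective _ hinj, Finset.card_univ, Fintype.card_coe, hS, hT]
  intro b
  by_cases hb : b ∈ S
  · have hbi : b ∈ Finset.univ.image g := himg ▸ hb
    obtain ⟨j, _, hjb⟩ := Finset.mem_image.1 hbi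
    have hle : (Finset.univ.filter fun j' => g j' = b).card ≤ 1 := by
      refine Finset.card_le_one.2 fun a ha a' ha' => ?_
      exact hinj ((Finset.mem_filter.1 ha).2.trans (Finset.mem_filter.1 ha').2.symm)
    have hge : 1 ≤ (Finset.univ.filter fun j' => g j' = b).card := by
      refine Finset.card_pos.2 ⟨j, ?_⟩
      exact Finset.mem_filter.2 ⟨Finset.mem_univ _, hjb⟩
    rw [expo, if_pos hb, if_pos hb]
    omega
  · have h0 : (Finset.univ.filter fun j' => g j' = b) = ∅ := by
      refine Finset.filter_eq_empty_iff.2 fun {j} _ => ?_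
      intro hjb
      exact hb (hjb ▸ hmem j)
    rw [expo, if_neg hb, if_neg hb, h0]
    simp

lemma count_le {S T : Finset V} {i : ℕ} (hS : S.card = i) (hT : T.card = i) :
    (Finset.univ.filter fun g : {x // x ∈ T} → V =>
        Function.Injective g ∧ ∀ j, g j ∈ S).card ≤ i.factorial := by
  classical
  set A := Finset.univ.filter fun g : {x // x ∈ T} → V =>
      Function.Injective g ∧ ∀ j, g j ∈ S with hA
  have hF : Function.Injective (fun a : {g // g ∈ A} =>
      (⟨fun j => (⟨a.1 j, (Finset.mem_filter.1 a.2).2.2 j⟩ : {x // x ∈ S}),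
        fun j j' h => (Finset.mem_filter.1 a.2).2.1 (congrArg Subtype.val h)⟩ :
        {x // x ∈ T} ↪ {x // x ∈ S})) := by
    intro a b hab
    apply Subtype.ext
    funext j
    have h1 := congrFun (congrArg (fun F : {x // x ∈ T} ↪ {x // x ∈ S} => (F : {x // x ∈ T} → {x // x ∈ S})) hab) j
    exact congrArg Subtype.val h1
  have h2 := Fintype.card_le_of_injective _ hF
  rw [Fintype.card_embedding_eq, Fintype.card_coe, Fintype.card_coe, Fintype.card_coe,
    hS, hT, Nat.descFactorial_self] at h2
  exact h2

end Comb

end GFMB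


/-- For the Gaussian distribution `G` of `(x, H_N x)` with
`x ∼ N(0, ε·I_N)`, and subsets `S, T ⊆ [N]` with `|S| = |T| = i`, the moment
`Ĝ(S,T) = E[∏_{i∈S} x_i ∏_{j∈T} y_j]` satisfies `|Ĝ(S,T)| ≤ ε^i · i! · N^{-i/2}`. -/
theorem gaussian_forrelation_moment_bound
    {n : ℕ} (ε : ℝ≥0) (i : ℕ) (S T : Finset (Fin n → Bool))
    (hS : S.card = i) (hT : T.card = i) :
    |∫ x, (∏ a ∈ S, x a) *
        ∏ j ∈ T, (∑ b : Fin n → Bool, hadamardEntry j b * x b)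
        ∂(Measure.pi fun _ : Fin n → Bool => gaussianReal 0 ε)|
      ≤ (ε : ℝ) ^ i * (i.factorial : ℝ) / Real.sqrt (2 ^ n) ^ i := by
  classical
  set μ := Measure.pi fun _ : Fin n → Bool => gaussianReal 0 ε with hμ
  set m : ℕ → ℝ := fun k => ∫ t, t ^ k ∂(gaussianReal 0 ε) with hm
  have hm0 : m 0 = 1 := by simp [hm]
  have hm2 : m 2 = (ε : ℝ) := GFMB.integral_sq ε
  have hmodd : ∀ k, Odd k → m k = 0 := fun k hk => GFMB.integral_pow_odd ε hk
  -- pointwise product rewriting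
  have hprodS : ∀ x : (Fin n → Bool) → ℝ,
      ∏ a ∈ S, x a = ∏ b, x b ^ (if b ∈ S then 1 else 0) := by
    intro x
    rw [show ∏ a ∈ S, x a = ∏ a ∈ S, x a ^ (if a ∈ S then 1 else 0) from
      Finset.prod_congr rfl fun a ha => by rw [if_pos ha, pow_one]]
    exact Finset.prod_subset (Finset.subset_univ S)
      (fun b _ hb => by rw [if_neg hb, pow_zero])
  have hprodT : ∀ (x : (Fin n → Bool) → ℝ) (g : {j // j ∈ T} → (Fin n → Bool)),
      (∏ j : {j // j ∈ T}, x (g j))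
        = ∏ b, x b ^ (Finset.univ.filter fun j => g j = b).card := by
    intro x g
    rw [← Finset.prod_fiberwise' Finset.univ g x]
    exact Finset.prod_congr rfl fun b _ => by rw [Finset.prod_const]
  have expand : ∀ x : (Fin n → Bool) → ℝ,
      (∏ a ∈ S, x a) * ∏ j ∈ T, (∑ b : Fin n → Bool, hadamardEntry j b * x b)
        = ∑ g : {j // j ∈ T} → (Fin n → Bool),
            (∏ j : {j // j ∈ T}, hadamardEntry j.1 (g j))
              * ∏ b, x b ^ GFMB.expo S T g b := by
    intro x
    rw [← Finset.prod_coe_sort T (fun j => ∑ b : Fin n → Bool, hadamardEntry j b * x b),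
      Finset.prod_univ_sum (fun _ => (Finset.univ : Finset (Fin n → Bool)))
        (fun (j : {x // x ∈ T}) (b : Fin n → Bool) => hadamardEntry j.1 b * x b),
      Fintype.piFinset_univ, Finset.mul_sum]
    refine Finset.sum_congr rfl fun g _ => ?_
    rw [Finset.prod_mul_distrib, mul_left_comm]
    congr 1
    rw [hprodS x, hprodT x g, ← Finset.prod_mul_distrib]
    exact Finset.prod_congr rfl fun b _ => (pow_add _ _ _).symm
  -- integrability and integral of each summand
  have hInt : ∀ g : {j // j ∈ T} → (Fin n → Bool),
      Integrable (fun x : (Fin n → Bool) → ℝ =>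
        (∏ j : {j // j ∈ T}, hadamardEntry j.1 (g j))
          * ∏ b, x b ^ GFMB.expo S T g b) μ :=
    fun g => (GFMB.pi_integrable ε (GFMB.expo S T g)).const_mul _
  have key : (∫ x, (∏ a ∈ S, x a) *
        ∏ j ∈ T, (∑ b : Fin n → Bool, hadamardEntry j b * x b) ∂μ)
      = ∑ g : {j // j ∈ T} → (Fin n → Bool),
          (∏ j : {j // j ∈ T}, hadamardEntry j.1 (g j))
            * ∏ b, m (GFMB.expo S T g b) := by
    rw [integral_congr_ae (Filter.Eventually.of_forall expand),
      integral_finset_sum _ (fun g _ => hInt g)]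
    refine Finset.sum_congr rfl fun g _ => ?_
    rw [integral_const_mul, GFMB.pi_integral ε (GFMB.expo S T g)]
  rw [key]
  have hsq : (0:ℝ) < Real.sqrt (2 ^ n) := Real.sqrt_pos.2 (by positivity)
  -- absolute value of the Hadamard coefficient
  have hc : ∀ g : {j // j ∈ T} → (Fin n → Bool),
      |∏ j : {j // j ∈ T}, hadamardEntry j.1 (g j)| = (Real.sqrt (2 ^ n))⁻¹ ^ i := by
    intro g
    rw [Finset.abs_prod]
    rw [Finset.prod_congr rfl fun (j : {j // j ∈ T}) _ => show
      |hadamardEntry j.1 (g j)| = (Real.sqrt (2 ^ n))⁻¹ by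
        simp only [hadamardEntry, abs_div, abs_pow, abs_neg, abs_one, one_pow,
          abs_of_nonneg (Real.sqrt_nonneg _), one_div]]
    rw [Finset.prod_const, Finset.card_univ, Fintype.card_coe, hT]
  -- bound on the moment factor
  have hM : ∀ g : {j // j ∈ T} → (Fin n → Bool),
      |∏ b, m (GFMB.expo S T g b)|
        ≤ if (Function.Injective g ∧ ∀ j, g j ∈ S) then (ε:ℝ) ^ i else 0 := by
    intro g
    by_cases hcase : Function.Injective g ∧ ∀ j, g j ∈ S
    · rw [if_pos hcase]
      have hexpo := GFMB.expo_of_inj hS hT g hcase.1 hcase.2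
      have : ∏ b, m (GFMB.expo S T g b) = ∏ b, (if b ∈ S then (ε:ℝ) else 1) := by
        refine Finset.prod_congr rfl fun b _ => ?_
        rw [hexpo b]
        by_cases hb : b ∈ S
        · rw [if_pos hb, if_pos hb, hm2]
        · rw [if_neg hb, if_neg hb, hm0]
      rw [this, Finset.prod_ite_mem, Finset.univ_inter, Finset.prod_const, hS,
        abs_of_nonneg (by positivity)]
    · rw [if_neg hcase]
      have : ∃ b, ¬ Even (GFMB.expo S T g b) := by
        by_contra h
        push_neg at h
        exact hcase (GFMB.comb hS hT g h)
      obtain ⟨b, hb⟩ := this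
      have hzero : m (GFMB.expo S T g b) = 0 :=
        hmodd _ (Nat.not_even_iff_odd.1 hb)
      rw [Finset.prod_eq_zero (Finset.mem_univ b) hzero, abs_zero]
  calc |∑ g : {j // j ∈ T} → (Fin n → Bool),
          (∏ j : {j // j ∈ T}, hadamardEntry j.1 (g j))
            * ∏ b, m (GFMB.expo S T g b)|
      ≤ ∑ g : {j // j ∈ T} → (Fin n → Bool),
          |(∏ j : {j // j ∈ T}, hadamardEntry j.1 (g j))
            * ∏ b, m (GFMB.expo S T g b)| := Finset.abs_sum_le_sum_abs _ _
    _ ≤ ∑ g : {j // j ∈ T} → (Fin n → Bool),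
          (Real.sqrt (2 ^ n))⁻¹ ^ i *
            (if (Function.Injective g ∧ ∀ j, g j ∈ S) then (ε:ℝ) ^ i else 0) := by
        refine Finset.sum_le_sum fun g _ => ?_
        rw [abs_mul, hc g]
        exact mul_le_mul_of_nonneg_left (hM g) (by positivity)
    _ = (Real.sqrt (2 ^ n))⁻¹ ^ i *
          (((Finset.univ.filter fun g : {j // j ∈ T} → (Fin n → Bool) =>
            Function.Injective g ∧ ∀ j, g j ∈ S).card : ℝ) * (ε:ℝ) ^ i) := by
        rw [← Finset.mul_sum]
        congr 1
        rw [Finset.sum_ite, Finset.sum_const, Finset.sum_const_zero, add_zero,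
          nsmul_eq_mul]
    _ ≤ (Real.sqrt (2 ^ n))⁻¹ ^ i * ((i.factorial : ℝ) * (ε:ℝ) ^ i) := by
        have hcard := GFMB.count_le hS hT
        have : (((Finset.univ.filter fun g : {j // j ∈ T} → (Fin n → Bool) =>
            Function.Injective g ∧ ∀ j, g j ∈ S).card : ℝ)) ≤ (i.factorial : ℝ) :=
          Nat.cast_le.2 hcard
        gcongr
    _ = (ε : ℝ) ^ i * (i.factorial : ℝ) / Real.sqrt (2 ^ n) ^ i := by
        rw [div_eq_mul_inv, ← inv_pow]
        ring
end

section
/- Let P, Q be probability distributions on ℝ^{2N} and for S ⊆ [k] let P^S Q^{S̄} denote the product distribution on (ℝ^{2N})^k whose j-th block is P if j ∈ S and Q otherwise. Define μ₀ = 2^{-(k-1)} ∑_{|S| even} P^S Q^{S̄} and μ₁ = 2^{-(k-1)} ∑_{|S| odd} P^S Q^{S̄}. Then for any moment index I = (I₁,…,I_k) with each I_j ⊆ [2N], μ̂₀(I) − μ̂₁(I) = 2^{-(k-1)} ∏_{j=1}^k (Q̂(I_j) − P̂(I_j)). -/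
set_option maxRecDepth 8000

open MeasureTheory ProbabilityTheory
open scoped NNReal ENNReal

/-- The moment `D̂(I) = E_{z∼D}[∏_{i∈I} z_i]` of a distribution on `ℝ^M`. -/
noncomputable def mom {M : ℕ} (D : Measure (Fin M → ℝ)) (I : Finset (Fin M)) : ℝ :=
  ∫ z, ∏ i ∈ I, z i ∂D

/-- The moment of a distribution on `(ℝ^M)^k` indexed by a block index
`I = (I₁,…,I_k)`. -/
noncomputable def blockMom {M k : ℕ} (D : Measure (Fin k → Fin M → ℝ))
    (I : Fin k → Finset (Fin M)) : ℝ :=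
  ∫ z, ∏ j, ∏ i ∈ I j, z j i ∂D

/-- The product distribution `P^S Q^{S̄}` whose `j`-th block is `P` for `j ∈ S`
and `Q` otherwise. -/
noncomputable def prodDist {M k : ℕ} (P Q : Measure (Fin M → ℝ))
    (S : Finset (Fin k)) : Measure (Fin k → Fin M → ℝ) :=
  Measure.pi fun j => if j ∈ S then P else Q

/-- Moments of product distributions factor. -/
lemma blockMom_prodDist {M k : ℕ} (P Q : Measure (Fin M → ℝ))
    [IsProbabilityMeasure P] [IsProbabilityMeasure Q]
    (S : Finset (Fin k)) (I : Fin k → Finset (Fin M)) :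
    blockMom (prodDist P Q S) I
      = ∏ j, mom (if j ∈ S then P else Q) (I j) := by
  letI inst : ∀ _j : Fin k, MeasureSpace (Fin M → ℝ) := fun j => ⟨if j ∈ S then P else Q⟩
  haveI hsf : ∀ j : Fin k, SigmaFinite (@volume _ (inst j)) := fun j => by
    show SigmaFinite (if j ∈ S then P else Q)
    split_ifs <;> infer_instance
  have := integral_fintype_prod_eq_prod (E := fun _ : Fin k => Fin M → ℝ)
    (fun j (z : Fin M → ℝ) => ∏ i ∈ I j, z i) (μ := fun j => if j ∈ S then P else Q)
  simp only [blockMom, mom, prodDist]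
  exact this

lemma prod_ite_mem_split {k : ℕ} (p q : Fin k → ℝ) (S : Finset (Fin k)) :
    ∏ j, (if j ∈ S then p j else q j) = (∏ j ∈ S, p j) * ∏ j ∈ Sᶜ, q j := by
  rw [Finset.prod_ite, Finset.filter_mem_eq_inter, Finset.univ_inter]
  congr 1
  · congr 1
    ext x; simp

/-- With `μ₀ = 2^{-(k-1)} ∑_{|S| even} P^S Q^{S̄}` and
`μ₁ = 2^{-(k-1)} ∑_{|S| odd} P^S Q^{S̄}`, for any moment index `I = (I₁,…,I_k)`:
`μ̂₀(I) − μ̂₁(I) = 2^{-(k-1)} ∏_j (Q̂(I_j) − P̂(I_j))`. -/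
theorem parity_mixture_moment_difference
    {N k : ℕ} (hk : 1 ≤ k)
    (P Q : Measure (Fin (2 * N) → ℝ))
    [IsProbabilityMeasure P] [IsProbabilityMeasure Q]
    (hint : ∀ (S : Finset (Fin k)) (I : Fin k → Finset (Fin (2 * N))),
      Integrable (fun z : Fin k → Fin (2 * N) → ℝ => ∏ j, ∏ i ∈ I j, z j i)
        (prodDist P Q S))
    (I : Fin k → Finset (Fin (2 * N))) :
    blockMom (((2 : ℝ≥0∞) ^ (k - 1))⁻¹ •
        ∑ S ∈ Finset.univ.filter (fun S : Finset (Fin k) => Even S.card),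
          prodDist P Q S) I
      - blockMom (((2 : ℝ≥0∞) ^ (k - 1))⁻¹ •
          ∑ S ∈ Finset.univ.filter (fun S : Finset (Fin k) => Odd S.card),
            prodDist P Q S) I
      = (1 / 2 ^ (k - 1) : ℝ) * ∏ j, (mom Q (I j) - mom P (I j)) := by
  set c : ℝ := (1 / 2 ^ (k - 1) : ℝ) with hc
  have htoReal : (((2 : ℝ≥0∞) ^ (k - 1))⁻¹).toReal = c := by
    simp [hc, ENNReal.toReal_inv]
  -- the moment of each scaled sum
  have hA : ∀ s : Finset (Finset (Fin k)),
      blockMom ((((2 : ℝ≥0∞) ^ (k - 1))⁻¹ : ℝ≥0∞) • ∑ S ∈ s, prodDist P Q S) I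
        = c * ∑ S ∈ s, (∏ j ∈ S, mom P (I j)) * ∏ j ∈ Sᶜ, mom Q (I j) := by
    intro s
    rw [blockMom, integral_smul_measure, integral_finset_sum_measure
      (fun S _ => hint S I), htoReal, smul_eq_mul]
    congr 1
    refine Finset.sum_congr rfl fun S _ => ?_
    rw [← blockMom, blockMom_prodDist P Q S I, ← prod_ite_mem_split]
    exact Finset.prod_congr rfl fun j _ => by split_ifs <;> rfl
  rw [hA, hA, ← mul_sub]
  congr 1
  have key : ∏ j, (mom Q (I j) - mom P (I j))
      = ∑ S : Finset (Fin k), (-1 : ℝ) ^ S.card *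
          ((∏ j ∈ S, mom P (I j)) * ∏ j ∈ Sᶜ, mom Q (I j)) := by
    have h0 : ∀ j : Fin k, mom Q (I j) - mom P (I j)
        = (fun j => -mom P (I j)) j + (fun j => mom Q (I j)) j := fun j => by
      simp; ring
    rw [Finset.prod_congr rfl fun j _ => h0 j, Finset.prod_add, ← Finset.powerset_univ]
    refine Finset.sum_congr rfl fun S _ => ?_
    rw [Finset.prod_congr rfl (fun j (_ : j ∈ S) => neg_eq_neg_one_mul (mom P (I j))),
      Finset.prod_mul_distrib, Finset.prod_const, Finset.compl_eq_univ_sdiff]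
    ring
  have hnot : Finset.univ.filter (fun S : Finset (Fin k) => ¬ Even S.card)
      = Finset.univ.filter (fun S : Finset (Fin k) => Odd S.card) := by
    ext S; simp [Nat.not_even_iff_odd]
  have he : ∑ S ∈ Finset.univ.filter (fun S : Finset (Fin k) => Even S.card),
      (-1 : ℝ) ^ S.card * ((∏ j ∈ S, mom P (I j)) * ∏ j ∈ Sᶜ, mom Q (I j))
      = ∑ S ∈ Finset.univ.filter (fun S : Finset (Fin k) => Even S.card),
        (∏ j ∈ S, mom P (I j)) * ∏ j ∈ Sᶜ, mom Q (I j) := by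
    refine Finset.sum_congr rfl fun S hS => ?_
    rw [Finset.mem_filter] at hS
    rw [hS.2.neg_one_pow, one_mul]
  have ho : ∑ S ∈ Finset.univ.filter (fun S : Finset (Fin k) => Odd S.card),
      (-1 : ℝ) ^ S.card * ((∏ j ∈ S, mom P (I j)) * ∏ j ∈ Sᶜ, mom Q (I j))
      = -∑ S ∈ Finset.univ.filter (fun S : Finset (Fin k) => Odd S.card),
        (∏ j ∈ S, mom P (I j)) * ∏ j ∈ Sᶜ, mom Q (I j) := by
    rw [← Finset.sum_neg_distrib]
    refine Finset.sum_congr rfl fun S hS => ?_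
    rw [Finset.mem_filter] at hS
    rw [hS.2.neg_one_pow]
    ring
  rw [key, ← Finset.sum_filter_add_sum_filter_not Finset.univ
    (fun S : Finset (Fin k) => Even S.card), hnot, he, ho]
  ring
end

section
/- Let H : {-1,1}^{2kN} → [-1,1] be identified with its multilinear extension, let μ₀, μ₁ be distributions on ℝ^{2kN} whose moments agree for all index sets of size < 2k or odd block sizes, and satisfy |μ̂₀(I) − μ̂₁(I)| ≤ 2^{-k+1} ε^i N^{-i/2} i! when |I| = 2i. If p ≤ 1/(2N), ε = 1/(60 k² ln N), and P ∈ [-p,p]^{2kN}, then |E_{z∼P·μ₀}[H(z)] − E_{z∼P·μ₁}[H(z)]| ≤ O(2^{-2k} L_{2k}(H) p^{2k} N^{-k/2} + p^{2(k+1)} N^{(k+1)/2}), where L_{2k}(H) = ∑_{|S|=2k} |Ĥ(S)|. -/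
open MeasureTheory ProbabilityTheory
open scoped NNReal ENNReal

/-- The moment of a distribution on `ℝ^{k × M}` indexed by a set of
(block, coordinate) pairs. -/
noncomputable def pairMom {M k : ℕ} (D : Measure (Fin k → Fin M → ℝ))
    (I : Finset (Fin k × Fin M)) : ℝ :=
  ∫ z, ∏ s ∈ I, z s.1 s.2 ∂D

section AuxLemmas
open scoped symmDiff

variable {ι : Type*} [Fintype ι] [DecidableEq ι]

lemma aux_prod_mul_prod_symmDiff (x : ι → ℝ) (hx : ∀ i, x i = 1 ∨ x i = -1)
    (S T : Finset ι) :
    (∏ s ∈ S, x s) * ∏ s ∈ T, x s = ∏ s ∈ S ∆ T, x s := by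
  have hsq : ∀ i, x i * x i = 1 := by
    intro i; rcases hx i with h | h <;> rw [h] <;> norm_num
  have hS : (∏ s ∈ S \ T, x s) * ∏ s ∈ S ∩ T, x s = ∏ s ∈ S, x s := by
    rw [← Finset.sdiff_inter_self_left S T]
    exact Finset.prod_sdiff Finset.inter_subset_left
  have hT : (∏ s ∈ T \ S, x s) * ∏ s ∈ S ∩ T, x s = ∏ s ∈ T, x s := by
    rw [Finset.inter_comm, ← Finset.sdiff_inter_self_left T S]
    exact Finset.prod_sdiff Finset.inter_subset_left
  have hinter : (∏ s ∈ S ∩ T, x s) * ∏ s ∈ S ∩ T, x s = 1 := by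
    rw [← Finset.prod_mul_distrib]
    exact Finset.prod_eq_one fun i _ => hsq i
  have hsd : ∏ s ∈ S ∆ T, x s = (∏ s ∈ S \ T, x s) * ∏ s ∈ T \ S, x s := by
    rw [symmDiff_def]
    exact Finset.prod_union (disjoint_sdiff_sdiff)
  rw [← hS, ← hT, hsd]
  calc (∏ s ∈ S \ T, x s) * (∏ s ∈ S ∩ T, x s) * ((∏ s ∈ T \ S, x s) * ∏ s ∈ S ∩ T, x s)
      = ((∏ s ∈ S \ T, x s) * ∏ s ∈ T \ S, x s) * ((∏ s ∈ S ∩ T, x s) * ∏ s ∈ S ∩ T, x s) := by ring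
    _ = (∏ s ∈ S \ T, x s) * ∏ s ∈ T \ S, x s := by rw [hinter, mul_one]

lemma aux_sum_bool_prod (U : Finset ι) :
    ∑ σ : ι → Bool, ∏ s ∈ U, (if σ s then (1:ℝ) else -1) =
      if U = ∅ then (2:ℝ) ^ Fintype.card ι else 0 := by
  have h : ∀ σ : ι → Bool, (∏ s ∈ U, (if σ s then (1:ℝ) else -1)) =
      ∏ s : ι, (if s ∈ U then (if σ s then (1:ℝ) else -1) else 1) := by
    intro σ
    rw [← Finset.prod_filter]
    congr 1
    simp [Finset.filter_mem_eq_inter]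
  simp_rw [h]
  have := Finset.prod_univ_sum (fun _ : ι => (Finset.univ : Finset Bool))
    (fun s b => if s ∈ U then (if b then (1:ℝ) else -1) else 1)
  rw [Fintype.piFinset_univ] at this
  rw [← this]
  have h2 : ∀ s : ι, (∑ b : Bool, if s ∈ U then (if b then (1:ℝ) else -1) else 1)
      = if s ∈ U then 0 else 2 := by
    intro s; by_cases hs : s ∈ U <;> simp [hs]
  simp_rw [h2]
  by_cases hU : U = ∅
  · simp [hU, Finset.card_univ]
  · simp only [hU, if_false]
    obtain ⟨a, ha⟩ := Finset.nonempty_iff_ne_empty.2 hU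
    exact Finset.prod_eq_zero (Finset.mem_univ a) (by simp [ha])

lemma aux_parseval (c : Finset ι → ℝ)
    (hb : ∀ x : ι → ℝ, (∀ i, x i = 1 ∨ x i = -1) →
      |∑ S : Finset ι, c S * ∏ s ∈ S, x s| ≤ 1) :
    ∑ S : Finset ι, (c S) ^ 2 ≤ 1 := by
  classical
  set n := Fintype.card ι
  have key : ∑ σ : ι → Bool, (∑ S : Finset ι, c S * ∏ s ∈ S,
      (if σ s then (1:ℝ) else -1)) ^ 2 = (2:ℝ) ^ n * ∑ S : Finset ι, (c S) ^ 2 := by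
    have expand : ∀ σ : ι → Bool,
        (∑ S : Finset ι, c S * ∏ s ∈ S, (if σ s then (1:ℝ) else -1)) ^ 2
        = ∑ S : Finset ι, ∑ T : Finset ι,
            c S * c T * ∏ s ∈ S ∆ T, (if σ s then (1:ℝ) else -1) := by
      intro σ
      set x : ι → ℝ := fun s => if σ s then (1:ℝ) else -1 with hxdef
      have hx : ∀ i, x i = 1 ∨ x i = -1 := by
        intro i; by_cases h : σ i <;> simp [hxdef, h]
      rw [sq, Finset.sum_mul_sum]
      refine Finset.sum_congr rfl fun S _ => Finset.sum_congr rfl fun T _ => ?_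
      rw [← aux_prod_mul_prod_symmDiff x hx S T]; ring
    simp_rw [expand]
    have inner : ∀ S T : Finset ι,
        ∑ σ : ι → Bool, c S * c T * ∏ s ∈ S ∆ T, (if σ s then (1:ℝ) else -1)
        = c S * c T * (if S = T then (2:ℝ) ^ n else 0) := by
      intro S T
      rw [← Finset.mul_sum, aux_sum_bool_prod]
      congr 1
      simp [Finset.symmDiff_eq_empty]; rfl
    calc ∑ σ : ι → Bool, ∑ S : Finset ι, ∑ T : Finset ι,
          c S * c T * ∏ s ∈ S ∆ T, (if σ s then (1:ℝ) else -1)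
        = ∑ S : Finset ι, ∑ T : Finset ι, ∑ σ : ι → Bool,
          c S * c T * ∏ s ∈ S ∆ T, (if σ s then (1:ℝ) else -1) := by
          rw [Finset.sum_comm]
          exact Finset.sum_congr rfl fun S _ => Finset.sum_comm
      _ = ∑ S : Finset ι, ∑ T : Finset ι, c S * c T * (if S = T then (2:ℝ) ^ n else 0) := by
          refine Finset.sum_congr rfl fun S _ => Finset.sum_congr rfl fun T _ => inner S T
      _ = (2:ℝ) ^ n * ∑ S : Finset ι, (c S) ^ 2 := by
          rw [Finset.mul_sum]
          refine Finset.sum_congr rfl fun S _ => ?_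
          rw [Finset.sum_eq_single S]
          · simp [sq]; ring
          · intro T _ hT; simp [Ne.symm hT]
          · intro h; exact absurd (Finset.mem_univ S) h
  have bdd : ∑ σ : ι → Bool, (∑ S : Finset ι, c S * ∏ s ∈ S,
      (if σ s then (1:ℝ) else -1)) ^ 2 ≤ (2:ℝ) ^ n := by
    have : ∀ σ : ι → Bool, (∑ S : Finset ι, c S * ∏ s ∈ S,
        (if σ s then (1:ℝ) else -1)) ^ 2 ≤ 1 := by
      intro σ
      have h1 := hb (fun s => if σ s then (1:ℝ) else -1) (by
        intro i; by_cases h : σ i <;> simp [h])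
      nlinarith [abs_nonneg (∑ S : Finset ι, c S * ∏ s ∈ S, (if σ s then (1:ℝ) else -1)), sq_abs (∑ S : Finset ι, c S * ∏ s ∈ S, (if σ s then (1:ℝ) else -1))]
    calc ∑ σ : ι → Bool, (∑ S : Finset ι, c S * ∏ s ∈ S,
          (if σ s then (1:ℝ) else -1)) ^ 2 ≤ ∑ _σ : ι → Bool, (1:ℝ) :=
            Finset.sum_le_sum fun σ _ => this σ
      _ = (2:ℝ) ^ n := by
          simp [Finset.card_univ, Fintype.card_fun]; rfl
  rw [key] at bdd
  have h2n : (0:ℝ) < (2:ℝ) ^ n := by positivity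
  nlinarith [h2n]

lemma aux_level_l1 (c : Finset ι → ℝ) (hp : ∑ S : Finset ι, (c S) ^ 2 ≤ 1)
    (A : Finset (Finset ι)) :
    ∑ S ∈ A, |c S| ≤ Real.sqrt A.card := by
  have h1 : (∑ S ∈ A, |c S|) ^ 2 ≤ (A.card : ℝ) * ∑ S ∈ A, (c S) ^ 2 := by
    have := Finset.sum_mul_sq_le_sq_mul_sq A (fun _ => (1:ℝ)) (fun S => |c S|)
    simp only [one_mul, one_pow, sq_abs, Finset.sum_const, nsmul_eq_mul, mul_one] at this
    exact this
  have h2 : (∑ S ∈ A, (c S) ^ 2) ≤ 1 := by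
    refine le_trans (Finset.sum_le_sum_of_subset_of_nonneg (Finset.subset_univ A)
      (fun _ _ _ => sq_nonneg _)) hp
  have h3 : (∑ S ∈ A, |c S|) ^ 2 ≤ (A.card : ℝ) := by
    calc (∑ S ∈ A, |c S|) ^ 2 ≤ (A.card : ℝ) * ∑ S ∈ A, (c S) ^ 2 := h1
      _ ≤ (A.card : ℝ) * 1 := by
          exact mul_le_mul_of_nonneg_left h2 (Nat.cast_nonneg _)
      _ = (A.card : ℝ) := mul_one _
  exact (Real.le_sqrt (Finset.sum_nonneg fun _ _ => abs_nonneg _) (Nat.cast_nonneg _)).2 h3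

lemma aux_geom_le_two {v : ℝ} (h0 : 0 ≤ v) (h : v ≤ 1/2) (n : ℕ) :
    ∑ j ∈ Finset.range n, v ^ j ≤ 2 - 2 * v ^ n := by
  induction n with
  | zero => simp
  | succ n ih =>
    rw [Finset.sum_range_succ]
    have : v ^ (n+1) ≤ v ^ n * (1/2) := by
      rw [pow_succ]
      exact mul_le_mul_of_nonneg_left h (pow_nonneg h0 n)
    nlinarith [pow_nonneg h0 n]

lemma aux_sqrt_choose (n i : ℕ) :
    Real.sqrt (Nat.choose n (2*i)) * (Nat.factorial i) ≤ (n:ℝ) ^ i := by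
  have key : (Nat.choose n (2*i)) * (Nat.factorial i) ^ 2 ≤ (n ^ (2*i) : ℕ) := by
    have h1 : (Nat.factorial i) ^ 2 ≤ Nat.factorial (2*i) := by
      have := Nat.factorial_mul_factorial_dvd_factorial_add i i
      rw [sq]
      have h2 := Nat.le_of_dvd (Nat.factorial_pos (i+i)) this
      simpa [two_mul] using h2
    calc (Nat.choose n (2*i)) * (Nat.factorial i) ^ 2
        ≤ (Nat.choose n (2*i)) * Nat.factorial (2*i) :=
          Nat.mul_le_mul_left _ h1
      _ = Nat.descFactorial n (2*i) := by
          rw [Nat.descFactorial_eq_factorial_mul_choose, Nat.mul_comm]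
      _ ≤ n ^ (2*i) := Nat.descFactorial_le_pow n (2*i)
  have keyR : ((Nat.choose n (2*i) : ℝ)) * ((Nat.factorial i : ℝ)) ^ 2 ≤ ((n:ℝ) ^ i) ^ 2 := by
    have := (Nat.cast_le (α := ℝ)).2 key
    push_cast at this
    rw [← pow_mul, mul_comm i 2]
    exact this
  have hnn : (0:ℝ) ≤ Real.sqrt (Nat.choose n (2*i)) * (Nat.factorial i) := by positivity
  have := Real.sqrt_le_sqrt keyR
  rw [Real.sqrt_mul (Nat.cast_nonneg _), Real.sqrt_sq (Nat.cast_nonneg _),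
    Real.sqrt_sq (by positivity)] at this
  exact this

lemma aux_odd_block {k M : ℕ} (S : Finset (Fin k × Fin M)) (h : Odd S.card) :
    ∃ j : Fin k, Odd (S.filter fun s => s.1 = j).card := by
  by_contra hc
  push_neg at hc
  have heven : ∀ j : Fin k, Even (S.filter fun s => s.1 = j).card := by
    intro j; exact Nat.not_odd_iff_even.1 (hc j)
  have hcard : S.card = ∑ j : Fin k, (S.filter fun s => s.1 = j).card :=
    Finset.card_eq_sum_card_fiberwise (fun x _ => Finset.mem_univ x.1)
  rw [hcard] at h
  exact (Nat.not_odd_iff_even.2 (Finset.even_sum _ fun j _ => heven j)) h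

lemma aux_tail_geom {v : ℝ} (h0 : 0 ≤ v) (h : v ≤ 1/2) (t M : ℕ) :
    ∑ m ∈ Finset.range M, (if t ≤ m then v ^ m else 0) ≤ 2 * v ^ t := by
  have hfil : (Finset.range M).filter (fun m => t ≤ m) = Finset.Ico t M := by
    ext m; simp [Finset.mem_filter, Finset.mem_range, Finset.mem_Ico]; tauto
  rw [← Finset.sum_filter, hfil, Finset.sum_Ico_eq_sum_range]
  have : ∀ j, v ^ (t + j) = v ^ t * v ^ j := fun j => pow_add v t j
  simp_rw [this]
  rw [← Finset.mul_sum]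
  have hg := aux_geom_le_two h0 h (M - t)
  have hvt : 0 ≤ v ^ t := pow_nonneg h0 t
  nlinarith [pow_nonneg h0 (M - t)]

end AuxLemmas

set_option maxHeartbeats 2000000

/-- Let `H : {-1,1}^{2kN} → [-1,1]` be (the multilinear extension
of) a bounded Boolean function, given by its Fourier coefficients `c`, and let
`μ₀, μ₁` be distributions on `ℝ^{2kN}` whose moments agree for index sets of
size `< 2k` or with a block of odd size, and whose moments at size `2i` differ
by at most `2^{-k+1} ε^i N^{-i/2} i!`.  If `p ≤ 1/(2N)`, `ε = 1/(60 k² ln N)`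
and `P ∈ [-p,p]^{2kN}`, then
`|E_{z∼P·μ₀}[H(z)] − E_{z∼P·μ₁}[H(z)]|
   ≤ O(2^{-2k} L_{2k}(H) p^{2k} N^{-k/2} + p^{2(k+1)} N^{(k+1)/2})`,
with a universal constant. -/
theorem single_step_analysis_around_origin :
    ∃ C : ℝ, 0 < C ∧
      ∀ (N k : ℕ), 2 ≤ N → 1 ≤ k →
      ∀ ε p : ℝ, ε = 1 / (60 * (k : ℝ) ^ 2 * Real.log N) →
        0 ≤ p → p ≤ 1 / (2 * N) →
      ∀ Pv : Fin k → Fin (2 * N) → ℝ, (∀ j i, |Pv j i| ≤ p) →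
      ∀ c : Finset (Fin k × Fin (2 * N)) → ℝ,
        (∀ x : Fin k → Fin (2 * N) → ℝ, (∀ j i, x j i = 1 ∨ x j i = -1) →
          |∑ S : Finset (Fin k × Fin (2 * N)), c S * ∏ s ∈ S, x s.1 s.2| ≤ 1) →
      ∀ μ₀ μ₁ : Measure (Fin k → Fin (2 * N) → ℝ),
        IsProbabilityMeasure μ₀ → IsProbabilityMeasure μ₁ →
        (∀ I : Finset (Fin k × Fin (2 * N)),
          Integrable (fun z : Fin k → Fin (2 * N) → ℝ => ∏ s ∈ I, z s.1 s.2) μ₀ ∧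
          Integrable (fun z : Fin k → Fin (2 * N) → ℝ => ∏ s ∈ I, z s.1 s.2) μ₁) →
        (∀ I : Finset (Fin k × Fin (2 * N)), I.card < 2 * k →
          pairMom μ₀ I = pairMom μ₁ I) →
        (∀ I : Finset (Fin k × Fin (2 * N)),
          (∃ j : Fin k, Odd (I.filter fun s => s.1 = j).card) →
          pairMom μ₀ I = pairMom μ₁ I) →
        (∀ (I : Finset (Fin k × Fin (2 * N))) (i : ℕ), I.card = 2 * i →
          |pairMom μ₀ I - pairMom μ₁ I|
            ≤ (2 / 2 ^ k : ℝ) * ε ^ i * (i.factorial : ℝ) / Real.sqrt N ^ i) →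
        |(∫ z, (∑ S : Finset (Fin k × Fin (2 * N)),
              c S * ∏ s ∈ S, Pv s.1 s.2 * z s.1 s.2) ∂μ₀)
          - ∫ z, (∑ S : Finset (Fin k × Fin (2 * N)),
              c S * ∏ s ∈ S, Pv s.1 s.2 * z s.1 s.2) ∂μ₁|
          ≤ C * ((1 / 2 ^ (2 * k) : ℝ)
                * (∑ S ∈ Finset.univ.filter
                    (fun S : Finset (Fin k × Fin (2 * N)) => S.card = 2 * k),
                    |c S|)
                * p ^ (2 * k) / Real.sqrt N ^ k
              + p ^ (2 * (k + 1)) * Real.sqrt N ^ (k + 1)) := by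
  classical
  refine ⟨4, by norm_num, ?_⟩
  intro N k hN hk ε p hε hp0 hpN Pv hPv c hc μ₀ μ₁ hμ₀ hμ₁ hInt hlow hodd hdiff
  -- Basic facts
  have hN1 : (1:ℝ) ≤ (N:ℝ) := by exact_mod_cast Nat.one_le_of_lt hN
  have hN2 : (2:ℝ) ≤ (N:ℝ) := by exact_mod_cast hN
  have hN0 : (0:ℝ) < (N:ℝ) := lt_of_lt_of_le one_pos hN1
  have hsN1 : (1:ℝ) ≤ Real.sqrt N := by
    rw [show (1:ℝ) = Real.sqrt 1 from (Real.sqrt_one).symm]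
    exact Real.sqrt_le_sqrt hN1
  have hsN0 : (0:ℝ) < Real.sqrt N := lt_of_lt_of_le one_pos hsN1
  have hk1 : (1:ℝ) ≤ (k:ℝ) := by exact_mod_cast hk
  have hL : (2/3:ℝ) ≤ Real.log N := by
    have h2 : Real.log 2 ≤ Real.log N := Real.log_le_log (by norm_num) hN2
    have := Real.log_two_gt_d9
    linarith
  have hden : (0:ℝ) < 60 * (k:ℝ)^2 * Real.log N := by nlinarith
  have hε0 : 0 < ε := by rw [hε]; positivity
  have hεk : ε * (k:ℝ) ≤ 1/40 := by
    rw [hε, one_div, inv_mul_eq_div, div_le_div_iff₀ hden (by norm_num : (0:ℝ) < 40)]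
    nlinarith
  -- Step 1: evaluate the integrals
  have hrw : ∀ (μ : Measure (Fin k → Fin (2*N) → ℝ)),
      (∀ I : Finset (Fin k × Fin (2*N)),
        Integrable (fun z : Fin k → Fin (2*N) → ℝ => ∏ s ∈ I, z s.1 s.2) μ) →
      (∫ z, (∑ S : Finset (Fin k × Fin (2*N)),
          c S * ∏ s ∈ S, Pv s.1 s.2 * z s.1 s.2) ∂μ)
      = ∑ S : Finset (Fin k × Fin (2*N)),
          (c S * ∏ s ∈ S, Pv s.1 s.2) * pairMom μ S := by
    intro μ hI
    have hsw : ∀ z : Fin k → Fin (2*N) → ℝ,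
        (∑ S : Finset (Fin k × Fin (2*N)), c S * ∏ s ∈ S, Pv s.1 s.2 * z s.1 s.2)
        = ∑ S : Finset (Fin k × Fin (2*N)),
            (c S * ∏ s ∈ S, Pv s.1 s.2) * ∏ s ∈ S, z s.1 s.2 := by
      intro z
      refine Finset.sum_congr rfl fun S _ => ?_
      rw [Finset.prod_mul_distrib, mul_assoc]
    simp_rw [hsw]
    rw [MeasureTheory.integral_finset_sum _ (fun S _ => ((hI S).const_mul _))]
    exact Finset.sum_congr rfl fun S _ => MeasureTheory.integral_const_mul _ _
  rw [hrw μ₀ (fun I => (hInt I).1), hrw μ₁ (fun I => (hInt I).2),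
    ← Finset.sum_sub_distrib]
  have hsub : ∀ S : Finset (Fin k × Fin (2*N)),
      (c S * ∏ s ∈ S, Pv s.1 s.2) * pairMom μ₀ S
        - (c S * ∏ s ∈ S, Pv s.1 s.2) * pairMom μ₁ S
      = (c S * ∏ s ∈ S, Pv s.1 s.2) * (pairMom μ₀ S - pairMom μ₁ S) := by
    intro S; ring
  simp_rw [hsub]
  -- absolute values
  set F : Finset (Fin k × Fin (2*N)) → ℝ := fun S =>
    |c S| * (|∏ s ∈ S, Pv s.1 s.2| * |pairMom μ₀ S - pairMom μ₁ S|) with hF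
  have habs : |∑ S : Finset (Fin k × Fin (2*N)),
      (c S * ∏ s ∈ S, Pv s.1 s.2) * (pairMom μ₀ S - pairMom μ₁ S)|
      ≤ ∑ S : Finset (Fin k × Fin (2*N)), F S := by
    refine le_trans (Finset.abs_sum_le_sum_abs _ _) (Finset.sum_le_sum fun S _ => ?_)
    rw [hF, abs_mul, abs_mul, mul_assoc]
  refine le_trans habs ?_
  -- Parseval
  have hpar : ∑ S : Finset (Fin k × Fin (2*N)), (c S) ^ 2 ≤ 1 := by
    refine aux_parseval c fun y hy => ?_
    exact hc (fun j i => y (j, i)) (fun j i => hy (j, i))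
  -- bound on the product of Pv
  have hPbd : ∀ S : Finset (Fin k × Fin (2*N)), |∏ s ∈ S, Pv s.1 s.2| ≤ p ^ S.card := by
    intro S
    rw [Finset.abs_prod]
    calc ∏ s ∈ S, |Pv s.1 s.2| ≤ ∏ _s ∈ S, p :=
          Finset.prod_le_prod (fun s _ => abs_nonneg _) (fun s _ => hPv s.1 s.2)
      _ = p ^ S.card := Finset.prod_const p
  -- vanishing moments
  have hzero : ∀ S : Finset (Fin k × Fin (2*N)), S.card ≠ 2*k →
      ¬(Even S.card ∧ 2*k+2 ≤ S.card) → pairMom μ₀ S - pairMom μ₁ S = 0 := by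
    intro S hne hcond
    rcases Nat.even_or_odd S.card with he | ho
    · by_cases hik : S.card < 2*k
      · rw [hlow S hik, sub_self]
      · exfalso
        apply hcond
        refine ⟨he, ?_⟩
        obtain ⟨i, hi⟩ := he
        omega
    · rw [hodd S (aux_odd_block S ho), sub_self]
  -- split the sum at level 2k
  rw [← Finset.sum_filter_add_sum_filter_not Finset.univ
    (fun S : Finset (Fin k × Fin (2*N)) => S.card = 2*k) F]
  set Lsum : ℝ := ∑ S ∈ Finset.univ.filter
      (fun S : Finset (Fin k × Fin (2*N)) => S.card = 2*k), |c S| with hLsum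
  have hLsum0 : 0 ≤ Lsum := Finset.sum_nonneg fun S _ => abs_nonneg _
  -- Part 1 : level exactly 2k
  have hfk : ε ^ k * (Nat.factorial k : ℝ) ≤ (1/2) ^ k := by
    calc ε ^ k * (Nat.factorial k : ℝ) ≤ ε ^ k * (k:ℝ) ^ k := by
          have hkf : (Nat.factorial k : ℝ) ≤ (k:ℝ) ^ k := by
            exact_mod_cast Nat.factorial_le_pow k
          exact mul_le_mul_of_nonneg_left hkf (pow_nonneg hε0.le k)
      _ = (ε * k) ^ k := (mul_pow ε (k:ℝ) k).symm
      _ ≤ (1/2) ^ k := by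
          refine pow_le_pow_left₀ (by positivity) ?_ k
          linarith
  have hpart1 : ∑ S ∈ Finset.univ.filter
      (fun S : Finset (Fin k × Fin (2*N)) => S.card = 2*k), F S
      ≤ 2 * ((1 / 2 ^ (2*k)) * Lsum * p ^ (2*k) / Real.sqrt N ^ k) := by
    have hstep : ∑ S ∈ Finset.univ.filter
        (fun S : Finset (Fin k × Fin (2*N)) => S.card = 2*k), F S
        ≤ Lsum * (p ^ (2*k) *
            ((2 / 2 ^ k : ℝ) * ε ^ k * (Nat.factorial k : ℝ) / Real.sqrt N ^ k)) := by
      rw [hLsum, Finset.sum_mul]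
      refine Finset.sum_le_sum fun S hS => ?_
      have hcard : S.card = 2*k := (Finset.mem_filter.1 hS).2
      have h1 : |∏ s ∈ S, Pv s.1 s.2| ≤ p ^ (2*k) := by
        rw [← hcard]; exact hPbd S
      have h2 := hdiff S k hcard
      rw [hF]
      exact mul_le_mul_of_nonneg_left
        (mul_le_mul h1 h2 (abs_nonneg _) (by positivity)) (abs_nonneg _)
    refine hstep.trans ?_
    have hDk : (2 / 2 ^ k : ℝ) * ε ^ k * (Nat.factorial k : ℝ) / Real.sqrt N ^ k
        ≤ 2 * (1 / 2 ^ (2*k)) / Real.sqrt N ^ k := by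
      refine (div_le_div_iff_of_pos_right (by positivity)).2 ?_
      calc (2 / 2 ^ k : ℝ) * ε ^ k * (Nat.factorial k : ℝ)
          = (2 / 2 ^ k : ℝ) * (ε ^ k * (Nat.factorial k : ℝ)) := by ring
        _ ≤ (2 / 2 ^ k : ℝ) * (1/2) ^ k := by
            refine mul_le_mul_of_nonneg_left hfk (by positivity)
        _ = 2 * (1 / 2 ^ (2*k)) := by
            rw [show 2*k = k+k by ring, pow_add, div_pow, one_pow]
            ring
    calc Lsum * (p ^ (2*k) *
          ((2 / 2 ^ k : ℝ) * ε ^ k * (Nat.factorial k : ℝ) / Real.sqrt N ^ k))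
        ≤ Lsum * (p ^ (2*k) * (2 * (1 / 2 ^ (2*k)) / Real.sqrt N ^ k)) := by
          refine mul_le_mul_of_nonneg_left
            (mul_le_mul_of_nonneg_left hDk (by positivity)) hLsum0
      _ = 2 * ((1 / 2 ^ (2*k)) * Lsum * p ^ (2*k) / Real.sqrt N ^ k) := by ring
  -- Part 2 : higher levels
  set n : ℕ := Fintype.card (Fin k × Fin (2*N)) with hn
  have hncast : (n:ℝ) = (k:ℝ) * (2*(N:ℝ)) := by
    have : n = k * (2*N) := by rw [hn, Fintype.card_prod, Fintype.card_fin, Fintype.card_fin]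
    rw [this]; push_cast; ring
  set u : ℝ := ε * (n:ℝ) * p^2 / Real.sqrt N with hu
  have hu0 : 0 ≤ u := by rw [hu]; positivity
  have hεn : ε * (n:ℝ) ≤ (N:ℝ)/20 := by
    rw [hncast]
    calc ε * ((k:ℝ) * (2*(N:ℝ))) = (ε * k) * (2*(N:ℝ)) := by ring
      _ ≤ (1/40) * (2*(N:ℝ)) := mul_le_mul_of_nonneg_right hεk (by positivity)
      _ = (N:ℝ)/20 := by ring
  have hεnN : ε * (n:ℝ) ≤ (N:ℝ) := by
    refine hεn.trans ?_
    linarith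
  have hεn0 : 0 ≤ ε * (n:ℝ) := by positivity
  have hu4 : u ≤ 1/4 := by
    have h1 : u ≤ ε * (n:ℝ) * p^2 := by
      rw [hu]
      exact div_le_self (by positivity) hsN1
    have hp2 : p^2 ≤ (1/(2*(N:ℝ)))^2 := pow_le_pow_left₀ hp0 hpN 2
    have h2 : ε * (n:ℝ) * p^2 ≤ ((N:ℝ)/20) * (1/(2*(N:ℝ)))^2 :=
      mul_le_mul hεn hp2 (by positivity) (by positivity)
    have h3 : ((N:ℝ)/20) * (1/(2*(N:ℝ)))^2 ≤ 1/4 := by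
      rw [div_pow, one_pow, mul_pow, div_mul_div_comm]
      rw [div_le_div_iff₀ (by positivity) (by norm_num)]
      nlinarith
    linarith
  set v : ℝ := Real.sqrt u with hv
  have hv0 : 0 ≤ v := Real.sqrt_nonneg u
  have hvsq : v^2 = u := Real.sq_sqrt hu0
  have hv2 : v ≤ 1/2 := by
    rw [hv, show (1/2:ℝ) = Real.sqrt (1/4) by
      rw [show (1/4:ℝ) = (1/2)^2 by norm_num, Real.sqrt_sq (by norm_num : (0:ℝ) ≤ 1/2)]]
    exact Real.sqrt_le_sqrt hu4
  have hlevel : ∀ i : ℕ, Real.sqrt (Nat.choose n (2*i)) *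
      (p ^ (2*i) * ((2 / 2 ^ k : ℝ) * ε ^ i * (Nat.factorial i : ℝ) / Real.sqrt N ^ i))
      ≤ (2 / 2 ^ k : ℝ) * v ^ (2*i) := by
    intro i
    have hmain := aux_sqrt_choose n i
    have hvexp : v ^ (2*i) = ε ^ i * (n:ℝ) ^ i * p ^ (2*i) / Real.sqrt N ^ i := by
      calc v ^ (2*i) = (v^2)^i := by rw [← pow_mul]
        _ = u^i := by rw [hvsq]
        _ = ε ^ i * (n:ℝ) ^ i * p ^ (2*i) / Real.sqrt N ^ i := by
            rw [hu, div_pow, mul_pow, mul_pow, ← pow_mul]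
    rw [hvexp]
    calc Real.sqrt (Nat.choose n (2*i)) *
        (p ^ (2*i) * ((2 / 2 ^ k : ℝ) * ε ^ i * (Nat.factorial i : ℝ) / Real.sqrt N ^ i))
        = (Real.sqrt (Nat.choose n (2*i)) * (Nat.factorial i : ℝ)) *
            ((2 / 2 ^ k : ℝ) * ε ^ i * p ^ (2*i) / Real.sqrt N ^ i) := by ring
      _ ≤ (n:ℝ)^i * ((2 / 2 ^ k : ℝ) * ε ^ i * p ^ (2*i) / Real.sqrt N ^ i) :=
          mul_le_mul_of_nonneg_right hmain (by positivity)
      _ = (2 / 2 ^ k : ℝ) * (ε ^ i * (n:ℝ) ^ i * p ^ (2*i) / Real.sqrt N ^ i) := by ring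
  have hmaps : ∀ S ∈ Finset.univ.filter
      (fun S : Finset (Fin k × Fin (2*N)) => ¬ S.card = 2*k), S.card ∈ Finset.range (n+1) := by
    intro S _
    refine Finset.mem_range.2 (Nat.lt_succ_of_le ?_)
    rw [hn]
    exact Finset.card_le_univ S
  have hfib := Finset.sum_fiberwise_of_maps_to hmaps F
  have hpart2 : ∑ S ∈ Finset.univ.filter
      (fun S : Finset (Fin k × Fin (2*N)) => ¬ S.card = 2*k), F S
      ≤ 4 * (p ^ (2*(k+1)) * Real.sqrt N ^ (k+1)) := by
    rw [← hfib]
    have hstep : ∀ m ∈ Finset.range (n+1),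
        (∑ S ∈ (Finset.univ.filter
            (fun S : Finset (Fin k × Fin (2*N)) => ¬ S.card = 2*k)).filter
          (fun S => S.card = m), F S)
        ≤ (if 2*k+2 ≤ m then (2 / 2^k : ℝ) * v ^ m else 0) := by
      intro m _
      by_cases hcond : Even m ∧ 2*k+2 ≤ m
      · obtain ⟨heven, hbig⟩ := hcond
        obtain ⟨i, hi⟩ := heven
        have hm2i : m = 2*i := by omega
        rw [if_pos hbig]
        set A := (Finset.univ.filter
            (fun S : Finset (Fin k × Fin (2*N)) => ¬ S.card = 2*k)).filter
          (fun S => S.card = m) with hA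
        have hsubA : A ⊆ Finset.univ.filter
            (fun S : Finset (Fin k × Fin (2*N)) => S.card = m) :=
          Finset.filter_subset_filter _ (Finset.filter_subset _ _)
        have hAcard : (A.card : ℝ) ≤ (Nat.choose n m : ℝ) := by
          have h1 : A.card ≤ (Finset.univ.filter
              (fun S : Finset (Fin k × Fin (2*N)) => S.card = m)).card :=
            Finset.card_le_card hsubA
          have h2 : (Finset.univ.filter
              (fun S : Finset (Fin k × Fin (2*N)) => S.card = m))
              = Finset.powersetCard m Finset.univ := by
            rw [Finset.powersetCard_eq_filter, Finset.powerset_univ]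
          rw [h2, Finset.card_powersetCard, Finset.card_univ, ← hn] at h1
          exact_mod_cast h1
        have hl1 : ∑ S ∈ A, |c S| ≤ Real.sqrt (Nat.choose n m) :=
          (aux_level_l1 c hpar A).trans (Real.sqrt_le_sqrt hAcard)
        calc ∑ S ∈ A, F S
            ≤ ∑ S ∈ A, |c S| * (p ^ m *
                ((2 / 2 ^ k : ℝ) * ε ^ i * (Nat.factorial i : ℝ) / Real.sqrt N ^ i)) := by
              refine Finset.sum_le_sum fun S hS => ?_
              have hcard : S.card = m := (Finset.mem_filter.1 hS).2
              have h1 : |∏ s ∈ S, Pv s.1 s.2| ≤ p ^ m := by rw [← hcard]; exact hPbd S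
              have h2 := hdiff S i (by rw [hcard, hm2i])
              simp only [hF]
              exact mul_le_mul_of_nonneg_left
                (mul_le_mul h1 h2 (abs_nonneg _) (by positivity)) (abs_nonneg _)
          _ = (∑ S ∈ A, |c S|) * (p ^ m *
                ((2 / 2 ^ k : ℝ) * ε ^ i * (Nat.factorial i : ℝ) / Real.sqrt N ^ i)) := by
              rw [Finset.sum_mul]
          _ ≤ Real.sqrt (Nat.choose n m) * (p ^ m *
                ((2 / 2 ^ k : ℝ) * ε ^ i * (Nat.factorial i : ℝ) / Real.sqrt N ^ i)) :=
              mul_le_mul_of_nonneg_right hl1 (by positivity)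
          _ ≤ (2 / 2 ^ k : ℝ) * v ^ m := by rw [hm2i]; exact hlevel i
      · have hnn : (0:ℝ) ≤ (if 2*k+2 ≤ m then (2 / 2^k : ℝ) * v ^ m else 0) := by
          split
          · positivity
          · exact le_refl 0
        refine le_trans (le_of_eq (Finset.sum_eq_zero fun S hS => ?_)) hnn
        have h1 := Finset.mem_filter.1 hS
        have h2 := Finset.mem_filter.1 h1.1
        have hzero' := hzero S h2.2 (by rw [h1.2]; exact hcond)
        simp only [hF, hzero', abs_zero, mul_zero]
    refine (Finset.sum_le_sum hstep).trans ?_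
    have hfac : ∀ m : ℕ, (if 2*k+2 ≤ m then (2 / 2^k : ℝ) * v ^ m else 0)
        = (2/2^k : ℝ) * (if 2*k+2 ≤ m then v ^ m else 0) := by
      intro m; split <;> ring
    simp_rw [hfac]
    rw [← Finset.mul_sum]
    have hgeom := aux_tail_geom hv0 hv2 (2*k+2) (n+1)
    have hveq : v ^ (2*k+2) = (ε*(n:ℝ))^(k+1) * p^(2*(k+1)) / Real.sqrt N ^ (k+1) := by
      rw [show 2*k+2 = 2*(k+1) by ring, pow_mul, hvsq, hu, div_pow, mul_pow, mul_pow,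
        ← pow_mul]
    have h2k1 : (1:ℝ) ≤ 2^k := by
      exact_mod_cast Nat.one_le_two_pow
    calc (2/2^k:ℝ) * ∑ m ∈ Finset.range (n+1), (if 2*k+2 ≤ m then v ^ m else 0)
        ≤ (2/2^k:ℝ) * (2 * v ^ (2*k+2)) :=
          mul_le_mul_of_nonneg_left hgeom (by positivity)
      _ = (4/2^k:ℝ) * ((ε*(n:ℝ))^(k+1) * p^(2*(k+1)) / Real.sqrt N ^ (k+1)) := by
          rw [hveq]; ring
      _ ≤ 4 * ((ε*(n:ℝ))^(k+1) * p^(2*(k+1)) / Real.sqrt N ^ (k+1)) := by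
          refine mul_le_mul_of_nonneg_right ?_ (by positivity)
          calc (4:ℝ)/2^k ≤ 4/1 := by
                refine div_le_div_of_nonneg_left (by norm_num) (by norm_num) h2k1
            _ = 4 := by norm_num
      _ ≤ 4 * (((N:ℝ))^(k+1) * p^(2*(k+1)) / Real.sqrt N ^ (k+1)) := by
          refine mul_le_mul_of_nonneg_left ?_ (by norm_num)
          gcongr
      _ = 4 * (p^(2*(k+1)) * Real.sqrt N ^ (k+1)) := by
          have hNpow : ((N:ℝ))^(k+1) = Real.sqrt N ^ (k+1) * Real.sqrt N ^ (k+1) := by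
            rw [← mul_pow, Real.mul_self_sqrt hN0.le]
          have hs0 : Real.sqrt N ^ (k+1) ≠ 0 := by positivity
          rw [hNpow]
          field_simp
  -- combine
  have hA0 : 0 ≤ (1 / 2 ^ (2*k) : ℝ) * Lsum * p ^ (2*k) / Real.sqrt N ^ k := by positivity
  linarith [hpart1, hpart2]
end
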